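/- arXiv:2305.10117 — 9 statements merged into one kernel-verified Lean document; each statement's English description precedes it below -/
import Mathlib

section
/- Let g : ℂ → ℂ be analytic and bounded on the open unit disc, with Taylor expansion g(x) = Σ_{n ≥ 0} cₙ·xⁿ at 0. Then the power series h(z) := Σ_{n ≥ 0} c_{2n}·zⁿ converges and defines an analytic function on the open unit disc, h(x²) = (g(x) + g(−x))/2 for every complex x with |x| < 1, and sup_{|z|<1} |h(z)| ≤ sup_{|z|<1} |g(z)|. -/
/-- The open unit disc in `ℂ`. -/
def openUnitDisc : Set ℂ := {z : ℂ | ‖z‖ < 1}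

/-- `f` is a solution of the Collatz functional equation for `(k, wb, wf)`:
it is analytic and bounded on the open unit disc and satisfies the functional equation
`2 f(x²) = wb (f(x) + f(−x)) + wf x² (f(x⁶) − f(−x⁶)) + 2 x^(2k)` there. -/
def IsSolution (k : ℕ) (wb wf : ℝ) (f : ℂ → ℂ) : Prop :=
  AnalyticOnNhd ℂ f openUnitDisc ∧
  (∃ C : ℝ, ∀ z ∈ openUnitDisc, ‖f z‖ ≤ C) ∧
  ∀ x : ℂ, ‖x‖ < 1 →
    2 * f (x ^ 2) =
      (wb : ℂ) * (f x + f (-x)) + (wf : ℂ) * x ^ 2 * (f (x ^ 6) - f (-x ^ 6)) +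
        2 * x ^ (2 * k)

/-- `a` is the sequence of Taylor coefficients of `f` at `0`:
`f x = Σ aₙ xⁿ` on the open unit disc. -/
def HasCoeffs (f : ℂ → ℂ) (a : ℕ → ℂ) : Prop :=
  ∀ x : ℂ, ‖x‖ < 1 → HasSum (fun n => a n * x ^ n) (f x)

/-- Even part extraction for a power series. -/
lemma even_part_hasSum (g : ℂ → ℂ) (c : ℕ → ℂ)
    (hc : ∀ x : ℂ, ‖x‖ < 1 → HasSum (fun n => c n * x ^ n) (g x)) :
    ∀ x : ℂ, ‖x‖ < 1 →
      HasSum (fun n => c (2 * n) * (x ^ 2) ^ n) ((g x + g (-x)) / 2) := by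
  intro x hx
  have h1 := hc x hx
  have h2 := hc (-x) (by simpa using hx)
  have h3 := (h1.add h2).div_const 2
  have hi : Function.Injective (fun n => 2 * n : ℕ → ℕ) := by
    intro a b h
    simp only at h
    omega
  have hzero : ∀ n ∉ Set.range (fun n => 2 * n : ℕ → ℕ),
      (c n * x ^ n + c n * (-x) ^ n) / 2 = 0 := by
    intro n hn
    have hodd : Odd n := by
      rcases Nat.even_or_odd n with ⟨m, hm⟩ | ho
      · exact absurd ⟨m, by simp only []; omega⟩ hn
      · exact ho
    rw [hodd.neg_pow]
    ring
  have h4 := (Function.Injective.hasSum_iff hi hzero).2 h3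
  have heq : ∀ n : ℕ, ((fun n => (c n * x ^ n + c n * (-x) ^ n) / 2) ∘ (fun n => 2 * n)) n
      = c (2 * n) * (x ^ 2) ^ n := by
    intro n
    have hev : (-x) ^ (2 * n) = x ^ (2 * n) := Even.neg_pow ⟨n, by ring⟩ x
    simp only [Function.comp, hev, ← pow_mul]
    ring
  exact (funext heq) ▸ h4

set_option maxHeartbeats 1000000 in
theorem stmt_3 (g : ℂ → ℂ) (c : ℕ → ℂ) (C : ℝ)
    (hg : AnalyticOnNhd ℂ g openUnitDisc)
    (hb : ∀ z ∈ openUnitDisc, ‖g z‖ ≤ C)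
    (hc : HasCoeffs g c) :
    ∃ h : ℂ → ℂ,
      AnalyticOnNhd ℂ h openUnitDisc ∧
      (∀ z : ℂ, ‖z‖ < 1 → HasSum (fun n => c (2 * n) * z ^ n) (h z)) ∧
      (∀ x : ℂ, ‖x‖ < 1 → h (x ^ 2) = (g x + g (-x)) / 2) ∧
      (∀ z ∈ openUnitDisc, ‖h z‖ ≤ C) := by
  have key := even_part_hasSum g c hc
  set F : FormalMultilinearSeries ℂ ℂ ℂ :=
    FormalMultilinearSeries.ofScalars ℂ (fun n => c (2 * n)) with hFdef
  have hFnorm : ∀ n : ℕ, ‖F n‖ = ‖c (2 * n)‖ := fun n => by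
    rw [hFdef, FormalMultilinearSeries.ofScalars_norm]
  -- radius of F is at least 1
  have hrad : (1 : ENNReal) ≤ F.radius := by
    refine ENNReal.le_of_forall_nnreal_lt ?_
    intro r hr
    have hr1 : (r : ℝ) < 1 := by exact_mod_cast hr
    have hrnn : (0 : ℝ) ≤ (r : ℝ) := r.coe_nonneg
    set x : ℝ := Real.sqrt r with hxdef
    have hxnn : 0 ≤ x := Real.sqrt_nonneg _
    have hxsq : x ^ 2 = (r : ℝ) := Real.sq_sqrt hrnn
    have hx1 : ‖(x : ℂ)‖ < 1 := by
      rw [Complex.norm_of_nonneg hxnn]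
      nlinarith
    have hs := (key (x : ℂ) hx1).summable
    have hxc : ((x : ℂ)) ^ 2 = (r : ℂ) := by
      push_cast [← hxsq]
      ring
    rw [hxc] at hs
    have htend : Filter.Tendsto (fun n => ‖F n‖ * (r : ℝ) ^ n) Filter.atTop (nhds 0) := by
      have h0 := hs.tendsto_atTop_zero
      have h1 : Filter.Tendsto (fun n => ‖c (2 * n) * (r : ℂ) ^ n‖)
          Filter.atTop (nhds 0) := by
        simpa [Function.comp_def] using (continuous_norm.tendsto 0).comp h0
      convert h1 using 2 with n
      rw [hFnorm, norm_mul, norm_pow, Complex.norm_of_nonneg hrnn]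
    exact F.le_radius_of_tendsto htend
  have hpos : 0 < F.radius := lt_of_lt_of_le zero_lt_one hrad
  have hball : HasFPowerSeriesOnBall F.sum F 0 F.radius :=
    F.hasFPowerSeriesOnBall hpos
  -- HasSum of the even series to F.sum
  have hHasSum : ∀ z : ℂ, ‖z‖ < 1 →
      HasSum (fun n => c (2 * n) * z ^ n) (F.sum z) := by
    intro z hz
    have hz' : (‖z‖₊ : ENNReal) < F.radius := by
      refine lt_of_lt_of_le ?_ hrad
      exact_mod_cast hz
    have hmem : z ∈ Metric.eball (0 : ℂ) F.radius := by
      rw [EMetric.mem_ball, edist_zero_right]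
      exact hz'
    have hFS := F.hasSum hmem
    have he : (fun n => F n fun _ => z) = fun n => c (2 * n) * z ^ n := by
      funext n
      rw [hFdef, FormalMultilinearSeries.ofScalars_apply_eq, smul_eq_mul]
    rwa [he] at hFS
  refine ⟨F.sum, ?_, hHasSum, ?_, ?_⟩
  · -- analyticity
    have h1 : AnalyticOnNhd ℂ F.sum (Metric.eball (0 : ℂ) F.radius) :=
      hball.analyticOnNhd
    intro z hz
    refine h1 z ?_
    have h2 : (‖z‖₊ : ENNReal) < F.radius :=
      lt_of_lt_of_le (by exact_mod_cast (show ‖z‖ < 1 from hz)) hrad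
    rw [EMetric.mem_ball, edist_zero_right]
    exact h2
  · -- functional equation
    intro x hx
    have hx2 : ‖x ^ 2‖ < 1 := by
      rw [norm_pow]
      nlinarith [norm_nonneg x]
    exact (hHasSum (x ^ 2) hx2).unique (key x hx)
  · -- bound
    intro z hz
    obtain ⟨x, hxz, hx1⟩ : ∃ x : ℂ, x ^ 2 = z ∧ ‖x‖ < 1 := by
      obtain ⟨x, hx⟩ := IsAlgClosed.exists_pow_nat_eq (k := ℂ) z (n := 2) (by norm_num)
      refine ⟨x, hx, ?_⟩
      have h2 : ‖x‖ ^ 2 < 1 := by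
        rw [← norm_pow, hx]; exact hz
      nlinarith [norm_nonneg x]
    have heq : F.sum z = (g x + g (-x)) / 2 := by
      rw [← hxz]
      have hx2 : ‖x ^ 2‖ < 1 := by rw [hxz]; exact hz
      exact (hHasSum (x ^ 2) hx2).unique (key x hx1)
    rw [heq]
    have hxd : x ∈ openUnitDisc := hx1
    have hxd' : -x ∈ openUnitDisc := by simpa [openUnitDisc] using hx1
    calc ‖(g x + g (-x)) / 2‖
        ≤ (‖g x‖ + ‖g (-x)‖) / 2 := by
          rw [norm_div]
          simp only [Complex.norm_two]
          gcongr
          exact norm_add_le _ _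
      _ ≤ (C + C) / 2 := by gcongr; exacts [hb x hxd, hb (-x) hxd']
      _ = C := by ring
end

section
/- If |w_b| + |w_f| < 1, then for every positive integer k there exists exactly one solution of the Collatz functional equation for (k, w_b, w_f). -/
namespace Stmt6Aux

open Set Metric Complex FormalMultilinearSeries
open scoped ENNReal NNReal

lemma disc_eq_ball : openUnitDisc = Metric.ball (0 : ℂ) 1 := by
  ext z
  simp [openUnitDisc, Metric.mem_ball, Complex.dist_eq]

lemma isOpen_disc : IsOpen openUnitDisc := disc_eq_ball ▸ Metric.isOpen_ball

lemma closedBall_subset {r : ℝ} (hr : r < 1) :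
    Metric.closedBall (0 : ℂ) r ⊆ openUnitDisc := by
  rw [disc_eq_ball]
  exact Metric.closedBall_subset_ball hr

/-- The canonical power series of an analytic function on the disc. -/
noncomputable def pser (f : ℂ → ℂ) : FormalMultilinearSeries ℂ ℂ ℂ :=
  cauchyPowerSeries f 0 ((1 / 2 : NNReal) : ℝ)

lemma hasFPSeries {f : ℂ → ℂ} (hf : AnalyticOnNhd ℂ f openUnitDisc)
    {r : NNReal} (h0 : 0 < r) (h1 : (r : ℝ) < 1) :
    HasFPowerSeriesOnBall f (pser f) 0 r := by
  have hd : ∀ {s : NNReal}, (s : ℝ) < 1 → DifferentiableOn ℂ f (Metric.closedBall 0 (s : ℝ)) :=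
    fun hs => hf.differentiableOn.mono (closedBall_subset hs)
  have h := (hd h1).hasFPowerSeriesOnBall h0
  have h2 : HasFPowerSeriesOnBall f (pser f) 0 (1 / 2 : NNReal) :=
    (hd (by norm_num)).hasFPowerSeriesOnBall (by norm_num)
  rw [← h.hasFPowerSeriesAt.eq_formalMultilinearSeries h2.hasFPowerSeriesAt]
  exact h

lemma one_le_radius {f : ℂ → ℂ} (hf : AnalyticOnNhd ℂ f openUnitDisc) :
    1 ≤ (pser f).radius := by
  apply ENNReal.le_of_forall_nnreal_lt
  intro r hr
  rcases eq_or_lt_of_le ((zero_le : 0 ≤ r)) with h0 | h0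
  · simp [← h0]
  · have hr1 : (r : ℝ) < 1 := by exact_mod_cast hr
    exact (hasFPSeries hf h0 hr1).r_le

lemma coeff_hasSum {f : ℂ → ℂ} (hf : AnalyticOnNhd ℂ f openUnitDisc)
    {x : ℂ} (hx : ‖x‖ < 1) :
    HasSum (fun n => (pser f).coeff n * x ^ n) (f x) := by
  set r : NNReal := ⟨(‖x‖ + 1) / 2, by positivity⟩ with hrdef
  have habs : ‖x‖ < (r : ℝ) := by
    simp only [hrdef, NNReal.coe_mk]
    show ‖x‖ < (‖x‖ + 1) / 2
    linarith
  have h0 : 0 < r := by rw [← NNReal.coe_pos]; exact lt_of_le_of_lt (norm_nonneg x) habs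
  have h1 : (r : ℝ) < 1 := by
    simp only [hrdef, NNReal.coe_mk]
    show (‖x‖ + 1) / 2 < 1
    linarith [norm_nonneg x]
  have h := hasFPSeries hf h0 h1
  have hx' : x ∈ Metric.eball (0 : ℂ) r := by
    rw [Metric.mem_eball, edist_zero_right] at *
    exact_mod_cast ENNReal.coe_lt_coe.mpr (by exact_mod_cast habs)
  have hs := h.hasSum hx'
  simp only [zero_add] at hs
  convert hs using 2 with n
  case e'_3 => rfl
  rw [FormalMultilinearSeries.apply_eq_pow_smul_coeff, smul_eq_mul, mul_comm]

lemma coeff_bound {f : ℂ → ℂ} (hf : AnalyticOnNhd ℂ f openUnitDisc)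
    {r : NNReal} (hr : (r : ℝ≥0∞) < 1) :
    ∃ C : ℝ, ∀ n, ‖(pser f).coeff n‖ * (r : ℝ) ^ n ≤ C := by
  obtain ⟨C, -, hC⟩ := (pser f).norm_mul_pow_le_of_lt_radius
    (lt_of_lt_of_le hr (one_le_radius hf))
  refine ⟨C, fun n => le_trans ?_ (hC n)⟩
  apply mul_le_mul_of_nonneg_right _ (by positivity)
  have h := ((pser f) n).le_opNorm (1 : Fin n → ℂ)
  simpa only [FormalMultilinearSeries.coeff, Pi.one_apply, norm_one,
    Finset.prod_const_one, mul_one] using h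

/-- The power series of the "even part composed with sqrt" of `f`. -/
noncomputable def eser (f : ℂ → ℂ) : FormalMultilinearSeries ℂ ℂ ℂ :=
  FormalMultilinearSeries.ofScalars ℂ (fun n => (pser f).coeff (2 * n))

lemma eser_coeff (f : ℂ → ℂ) (n : ℕ) : (eser f).coeff n = (pser f).coeff (2 * n) := by
  have h1 : (eser f).coeff n = (eser f n) (fun _ => (1 : ℂ)) := rfl
  rw [h1, eser, FormalMultilinearSeries.ofScalars_apply_eq]
  simp

lemma one_le_radius_eser {f : ℂ → ℂ} (hf : AnalyticOnNhd ℂ f openUnitDisc) :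
    1 ≤ (eser f).radius := by
  apply ENNReal.le_of_forall_nnreal_lt
  intro r hr
  set s : NNReal := NNReal.sqrt r with hs
  have hs1 : (s : ℝ≥0∞) < 1 := by
    have : s < 1 := by
      rw [hs, ← NNReal.sqrt_one]
      exact NNReal.sqrt_lt_sqrt.mpr (by exact_mod_cast hr)
    exact_mod_cast this
  obtain ⟨C, hC⟩ := coeff_bound hf hs1
  apply (eser f).le_radius_of_bound C
  intro n
  have hnorm : ‖(eser f) n‖ = ‖(pser f).coeff (2 * n)‖ := by
    rw [eser]
    exact FormalMultilinearSeries.ofScalars_norm ℂ _ n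
  calc ‖(eser f) n‖ * (r : ℝ) ^ n = ‖(pser f).coeff (2 * n)‖ * (s : ℝ) ^ (2 * n) := by
        have : ((r : ℝ)) ^ n = (s : ℝ) ^ (2 * n) := by
          rw [pow_mul]
          congr 1
          rw [hs]
          exact_mod_cast (NNReal.sq_sqrt r).symm
        rw [this, hnorm]
    _ ≤ C := hC (2 * n)

/-- The analytic function `y ↦ Σ a_{2n} yⁿ` where `a` are the coefficients of `f`. -/
noncomputable def evenPart (f : ℂ → ℂ) : ℂ → ℂ := (eser f).sum

lemma evenPart_hasSum {f : ℂ → ℂ} (hf : AnalyticOnNhd ℂ f openUnitDisc)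
    {y : ℂ} (hy : ‖y‖ < 1) :
    HasSum (fun n => (pser f).coeff (2 * n) * y ^ n) (evenPart f y) := by
  have hy' : y ∈ Metric.eball (0 : ℂ) (eser f).radius := by
    rw [Metric.mem_eball, edist_zero_right]
    calc (‖y‖₊ : ℝ≥0∞) < 1 := by
          exact_mod_cast (by exact_mod_cast hy : ‖y‖₊ < 1)
      _ ≤ _ := one_le_radius_eser hf
  have := (eser f).hasSum hy'
  convert this using 2 with n
  case e'_3 => rfl
  case e'_6 => rfl
  rw [FormalMultilinearSeries.apply_eq_pow_smul_coeff, smul_eq_mul, mul_comm]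
  congr 1
  exact (eser_coeff f n).symm

lemma evenPart_analytic {f : ℂ → ℂ} (hf : AnalyticOnNhd ℂ f openUnitDisc) :
    AnalyticOnNhd ℂ (evenPart f) openUnitDisc := by
  have h := (eser f).hasFPowerSeriesOnBall
    (lt_of_lt_of_le one_pos (one_le_radius_eser hf))
  intro z hz
  refine h.analyticAt_of_mem ?_
  rw [Metric.mem_eball, edist_zero_right]
  calc (‖z‖₊ : ℝ≥0∞) < 1 := by
        have : ‖z‖ < 1 := hz
        exact_mod_cast (by exact_mod_cast this : ‖z‖₊ < 1)
    _ ≤ _ := one_le_radius_eser hf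

lemma evenPart_sq {f : ℂ → ℂ} (hf : AnalyticOnNhd ℂ f openUnitDisc)
    {x : ℂ} (hx : ‖x‖ < 1) :
    evenPart f (x ^ 2) = (f x + f (-x)) / 2 := by
  have h1 := coeff_hasSum hf hx
  have h2 : HasSum (fun n => (pser f).coeff n * (-x) ^ n) (f (-x)) :=
    coeff_hasSum hf (by simpa using hx)
  have h3 := (h1.add h2).div_const 2
  set g : ℕ → ℂ := fun n => ((pser f).coeff n * x ^ n + (pser f).coeff n * (-x) ^ n) / 2
    with hg
  have hsupp : ∀ m, m ∉ Set.range (fun n => 2 * n) → g m = 0 := by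
    intro m hm
    have hodd : Odd m := by
      rcases Nat.even_or_odd m with he | ho
      · obtain ⟨t, ht⟩ := he
        exact absurd ⟨t, show 2 * t = m by omega⟩ hm
      · exact ho
    simp only [hg, hodd.neg_pow]
    ring
  have hinj : Function.Injective (fun n => 2 * n) := fun a b h => by dsimp at h; omega
  have h4 := (hinj.hasSum_iff hsupp).mpr h3
  have h5 : (fun n => g (2 * n)) = fun n => (pser f).coeff (2 * n) * (x ^ 2) ^ n := by
    funext n
    have : (-x) ^ (2 * n) = x ^ (2 * n) := (Even.neg_pow ⟨n, by ring⟩ x)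
    simp only [hg, ← pow_mul, this]
    ring
  have h6 : HasSum (fun n => (pser f).coeff (2 * n) * (x ^ 2) ^ n) ((f x + f (-x)) / 2) := by
    rw [← h5]
    exact h4
  have hx2 : ‖x ^ 2‖ < 1 := by
    rw [norm_pow]
    calc ‖x‖ ^ 2 ≤ ‖x‖ * 1 := by
          rw [sq]
          exact mul_le_mul_of_nonneg_left hx.le (norm_nonneg x)
      _ < 1 := by simpa using hx
  exact (evenPart_hasSum hf hx2).unique h6

lemma exists_sqrt {y : ℂ} (hy : ‖y‖ < 1) :
    ∃ x : ℂ, x ^ 2 = y ∧ ‖x‖ < 1 := by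
  obtain ⟨x, hx⟩ : ∃ x : ℂ, x ^ 2 = y :=
    IsAlgClosed.exists_pow_nat_eq y (n := 2) (by norm_num)
  refine ⟨x, hx, ?_⟩
  have h2 : ‖x‖ ^ 2 < 1 := by
    rw [← norm_pow, hx]
    exact hy
  nlinarith [norm_nonneg x]

lemma abs_sub_le'' (a b : ℂ) : ‖a - b‖ ≤ ‖a‖ + ‖b‖ := by
  simpa using norm_sub_le a b

lemma evenPart_rep {f : ℂ → ℂ} (hf : AnalyticOnNhd ℂ f openUnitDisc)
    {y : ℂ} (hy : ‖y‖ < 1) :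
    ∃ x : ℂ, ‖x‖ < 1 ∧ x ^ 2 = y ∧ evenPart f y = (f x + f (-x)) / 2 := by
  obtain ⟨x, hx2, hx1⟩ := exists_sqrt hy
  exact ⟨x, hx1, hx2, by rw [← hx2, evenPart_sq hf hx1]⟩

/-- The fixed-point operator for the Collatz functional equation. -/
noncomputable def Tfun (k : ℕ) (wb wf : ℝ) (f : ℂ → ℂ) : ℂ → ℂ :=
  fun y => (wb : ℂ) * evenPart f y + ((wf : ℂ) / 2) * y * (f (y ^ 3) - f (-(y ^ 3))) + y ^ k

lemma cube_mem {y : ℂ} (hy : ‖y‖ < 1) : ‖y ^ 3‖ < 1 := by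
  rw [norm_pow]
  exact pow_lt_one₀ (norm_nonneg y) hy (by norm_num)

lemma neg_mem {y : ℂ} (hy : ‖y‖ < 1) : ‖-y‖ < 1 := by
  simpa using hy

lemma Tfun_analytic {k : ℕ} {wb wf : ℝ} {f : ℂ → ℂ}
    (hf : AnalyticOnNhd ℂ f openUnitDisc) :
    AnalyticOnNhd ℂ (Tfun k wb wf f) openUnitDisc := by
  intro z hz
  have hz' : ‖z‖ < 1 := hz
  have h1 : AnalyticAt ℂ (evenPart f) z := evenPart_analytic hf z hz
  have hid : AnalyticAt ℂ (fun y : ℂ => y ^ 3) z := analyticAt_id.pow 3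
  have h2 : AnalyticAt ℂ (fun y : ℂ => f (y ^ 3)) z := by
    exact AnalyticAt.comp (f := fun y : ℂ => y ^ 3) (x := z)
      (hf (z ^ 3) (cube_mem hz')) hid
  have h3 : AnalyticAt ℂ (fun y : ℂ => f (-(y ^ 3))) z := by
    have hid' : AnalyticAt ℂ (fun y : ℂ => -(y ^ 3)) z := hid.neg
    exact AnalyticAt.comp (f := fun y : ℂ => -(y ^ 3)) (x := z)
      (hf (-(z ^ 3)) (neg_mem (cube_mem hz'))) hid'
  have hidk : AnalyticAt ℂ (fun y : ℂ => y ^ k) z := analyticAt_id.pow k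
  have hid1 : AnalyticAt ℂ (fun y : ℂ => y) z := analyticAt_id
  exact ((analyticAt_const.mul h1).add
    (((analyticAt_const.mul hid1).mul (h2.sub h3)))).add hidk

lemma abs_evenPart_le {f : ℂ → ℂ} (hf : AnalyticOnNhd ℂ f openUnitDisc)
    {C : ℝ} (hC : ∀ z ∈ openUnitDisc, ‖f z‖ ≤ C)
    {y : ℂ} (hy : ‖y‖ < 1) : ‖evenPart f y‖ ≤ C := by
  obtain ⟨x, hx1, hx2, hev⟩ := evenPart_rep hf hy
  rw [hev]
  have b1 := hC x hx1
  have b2 := hC (-x) (neg_mem hx1)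
  calc ‖(f x + f (-x)) / 2‖ ≤ (‖f x‖ + ‖f (-x)‖) / 2 := by
        rw [norm_div]
        simp only [Complex.norm_two]
        gcongr
        exact norm_add_le _ _
    _ ≤ C := by linarith

lemma abs_Tfun_le {k : ℕ} {wb wf : ℝ} {f : ℂ → ℂ}
    (hf : AnalyticOnNhd ℂ f openUnitDisc)
    {C : ℝ} (hC : ∀ z ∈ openUnitDisc, ‖f z‖ ≤ C)
    {y : ℂ} (hy : ‖y‖ < 1) :
    ‖Tfun k wb wf f y‖ ≤ |wb| * C + |wf| * C + 1 := by
  have hC0 : 0 ≤ C := le_trans (norm_nonneg _) (hC 0 (by simp [openUnitDisc]))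
  have hy0 : 0 ≤ ‖y‖ := norm_nonneg y
  have b1 : ‖(wb : ℂ) * evenPart f y‖ ≤ |wb| * C := by
    rw [norm_mul, Complex.norm_real, Real.norm_eq_abs]
    exact mul_le_mul_of_nonneg_left (abs_evenPart_le hf hC hy) (abs_nonneg wb)
  have b2 : ‖((wf : ℂ) / 2) * y * (f (y ^ 3) - f (-(y ^ 3)))‖ ≤ |wf| * C := by
    rw [norm_mul, norm_mul, norm_div, Complex.norm_real, Real.norm_eq_abs, Complex.norm_two]
    have hc1 := hC (y ^ 3) (cube_mem hy)
    have hc2 := hC (-(y ^ 3)) (neg_mem (cube_mem hy))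
    have hdiff : ‖f (y ^ 3) - f (-(y ^ 3))‖ ≤ 2 * C := by
      calc ‖f (y ^ 3) - f (-(y ^ 3))‖ ≤
            ‖f (y ^ 3)‖ + ‖f (-(y ^ 3))‖ := abs_sub_le'' _ _
        _ ≤ 2 * C := by linarith
    calc |wf| / 2 * ‖y‖ * ‖f (y ^ 3) - f (-(y ^ 3))‖
        ≤ |wf| / 2 * 1 * (2 * C) := by
          apply mul_le_mul _ hdiff (norm_nonneg _) (by positivity)
          exact mul_le_mul_of_nonneg_left hy.le (by positivity)
      _ = |wf| * C := by ring
  have b3 : ‖y ^ k‖ ≤ 1 := by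
    rw [norm_pow]
    exact pow_le_one₀ hy0 hy.le
  calc ‖Tfun k wb wf f y‖ ≤
        ‖(wb : ℂ) * evenPart f y +
          ((wf : ℂ) / 2) * y * (f (y ^ 3) - f (-(y ^ 3)))‖ + ‖y ^ k‖ :=
        norm_add_le _ _
    _ ≤ (‖(wb : ℂ) * evenPart f y‖ +
          ‖((wf : ℂ) / 2) * y * (f (y ^ 3) - f (-(y ^ 3)))‖) +
          ‖y ^ k‖ := by
        gcongr
        exact norm_add_le _ _
    _ ≤ |wb| * C + |wf| * C + 1 := by linarith

lemma abs_Tfun_sub_le {k : ℕ} {wb wf : ℝ} {f g : ℂ → ℂ}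
    (hf : AnalyticOnNhd ℂ f openUnitDisc) (hg : AnalyticOnNhd ℂ g openUnitDisc)
    {S : ℝ} (hS : ∀ z ∈ openUnitDisc, ‖f z - g z‖ ≤ S)
    {y : ℂ} (hy : ‖y‖ < 1) :
    ‖Tfun k wb wf f y - Tfun k wb wf g y‖ ≤ (|wb| + |wf|) * S := by
  have hS0 : 0 ≤ S := le_trans (norm_nonneg _) (hS 0 (by simp [openUnitDisc]))
  obtain ⟨x, hx1, hx2, hevf⟩ := evenPart_rep hf hy
  have hevg : evenPart g y = (g x + g (-x)) / 2 := by
    rw [← hx2, evenPart_sq hg hx1]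
  have hb1 : ‖evenPart f y - evenPart g y‖ ≤ S := by
    rw [hevf, hevg]
    have d1 := hS x hx1
    have d2 := hS (-x) (neg_mem hx1)
    calc ‖(f x + f (-x)) / 2 - (g x + g (-x)) / 2‖
        = ‖(f x - g x) + (f (-x) - g (-x))‖ / 2 := by
          rw [show (f x + f (-x)) / 2 - (g x + g (-x)) / 2
              = ((f x - g x) + (f (-x) - g (-x))) / 2 by ring, norm_div, Complex.norm_two]
      _ ≤ (‖f x - g x‖ + ‖f (-x) - g (-x)‖) / 2 := by
          gcongr
          exact norm_add_le _ _
      _ ≤ S := by linarith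
  have key : Tfun k wb wf f y - Tfun k wb wf g y =
      (wb : ℂ) * (evenPart f y - evenPart g y) +
        ((wf : ℂ) / 2) * y * ((f (y ^ 3) - g (y ^ 3)) - (f (-(y ^ 3)) - g (-(y ^ 3)))) := by
    simp only [Tfun]
    ring
  rw [key]
  have d1 := hS (y ^ 3) (cube_mem hy)
  have d2 := hS (-(y ^ 3)) (neg_mem (cube_mem hy))
  have hb2 : ‖((wf : ℂ) / 2) * y *
      ((f (y ^ 3) - g (y ^ 3)) - (f (-(y ^ 3)) - g (-(y ^ 3))))‖ ≤ |wf| * S := by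
    rw [norm_mul, norm_mul, norm_div, Complex.norm_real, Real.norm_eq_abs, Complex.norm_two]
    have hdiff : ‖(f (y ^ 3) - g (y ^ 3)) - (f (-(y ^ 3)) - g (-(y ^ 3)))‖ ≤
        2 * S := by
      calc ‖(f (y ^ 3) - g (y ^ 3)) - (f (-(y ^ 3)) - g (-(y ^ 3)))‖ ≤
            ‖f (y ^ 3) - g (y ^ 3)‖ +
              ‖f (-(y ^ 3)) - g (-(y ^ 3))‖ := abs_sub_le'' _ _
        _ ≤ 2 * S := by linarith
    calc |wf| / 2 * ‖y‖ *
          ‖(f (y ^ 3) - g (y ^ 3)) - (f (-(y ^ 3)) - g (-(y ^ 3)))‖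
        ≤ |wf| / 2 * 1 * (2 * S) := by
          apply mul_le_mul _ hdiff (norm_nonneg _) (by positivity)
          exact mul_le_mul_of_nonneg_left hy.le (by positivity)
      _ = |wf| * S := by ring
  calc ‖(wb : ℂ) * (evenPart f y - evenPart g y) +
        ((wf : ℂ) / 2) * y * ((f (y ^ 3) - g (y ^ 3)) - (f (-(y ^ 3)) - g (-(y ^ 3))))‖
      ≤ ‖(wb : ℂ) * (evenPart f y - evenPart g y)‖ +
        ‖((wf : ℂ) / 2) * y *
          ((f (y ^ 3) - g (y ^ 3)) - (f (-(y ^ 3)) - g (-(y ^ 3))))‖ :=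
      norm_add_le _ _
    _ ≤ |wb| * S + |wf| * S := by
        have : ‖(wb : ℂ) * (evenPart f y - evenPart g y)‖ ≤ |wb| * S := by
          rw [norm_mul, Complex.norm_real, Real.norm_eq_abs]
          exact mul_le_mul_of_nonneg_left hb1 (abs_nonneg wb)
        linarith
    _ = (|wb| + |wf|) * S := by ring

open scoped Classical in
noncomputable def ext (F : BoundedContinuousFunction ↥openUnitDisc ℂ) : ℂ → ℂ :=
  fun z => if h : z ∈ openUnitDisc then F ⟨z, h⟩ else 0

lemma ext_eq (F : BoundedContinuousFunction ↥openUnitDisc ℂ) {z : ℂ}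
    (hz : z ∈ openUnitDisc) : ext F z = F ⟨z, hz⟩ := by
  rw [ext]
  exact dif_pos hz

/-- The set of bounded continuous functions on the disc that are analytic. -/
def Aset : Set (BoundedContinuousFunction ↥openUnitDisc ℂ) :=
  {F | AnalyticOnNhd ℂ (ext F) openUnitDisc}

lemma zero_mem_Aset : (0 : BoundedContinuousFunction ↥openUnitDisc ℂ) ∈ Aset := by
  have h : ext (0 : BoundedContinuousFunction ↥openUnitDisc ℂ) = fun _ => (0 : ℂ) := by
    funext z
    rw [ext]
    split_ifs <;> simp
  show AnalyticOnNhd ℂ _ openUnitDisc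
  rw [h]
  exact analyticOnNhd_const

set_option synthInstance.maxHeartbeats 1000000 in
lemma isClosed_Aset : IsClosed Aset := by
  refine IsSeqClosed.isClosed ?_
  intro u F hu hF
  have hTU : TendstoUniformlyOn (fun n z => ext (u n) z) (ext F) Filter.atTop openUnitDisc := by
    rw [Metric.tendstoUniformlyOn_iff]
    intro ε hε
    obtain ⟨N, hN⟩ := Metric.tendsto_atTop.mp hF (ε / 2) (by linarith)
    refine Filter.eventually_atTop.mpr ⟨N, fun n hn z hz => ?_⟩
    rw [ext_eq _ hz, ext_eq _ hz]
    calc dist (F ⟨z, hz⟩) ((u n) ⟨z, hz⟩) = dist ((u n) ⟨z, hz⟩) (F ⟨z, hz⟩) := dist_comm _ _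
      _ ≤ dist (u n) F := BoundedContinuousFunction.dist_coe_le_dist _
      _ < ε := by have := hN n hn; linarith
  have hdiff := (hTU.tendstoLocallyUniformlyOn).differentiableOn
    (Filter.Eventually.of_forall fun n => (hu n).differentiableOn) isOpen_disc
  exact hdiff.analyticOnNhd isOpen_disc

lemma ext_bound (F : BoundedContinuousFunction ↥openUnitDisc ℂ) :
    ∀ z ∈ openUnitDisc, ‖ext F z‖ ≤ ‖F‖ := by
  intro z hz
  rw [ext_eq _ hz]
  exact BoundedContinuousFunction.norm_coe_le_norm F _

/-- The operator as a map on bounded continuous functions. -/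
noncomputable def TB (k : ℕ) (wb wf : ℝ) (F : ↥Aset) :
    BoundedContinuousFunction ↥openUnitDisc ℂ :=
  BoundedContinuousFunction.ofNormedAddCommGroup
    (fun z : ↥openUnitDisc => Tfun k wb wf (ext F.1) z)
    (ContinuousOn.restrict ((Tfun_analytic F.2).continuousOn))
    (|wb| * ‖F.1‖ + |wf| * ‖F.1‖ + 1)
    (fun z => by
      exact abs_Tfun_le F.2 (ext_bound F.1) z.2)

lemma TB_mem (k : ℕ) (wb wf : ℝ) (F : ↥Aset) : TB k wb wf F ∈ Aset := by
  show AnalyticOnNhd ℂ (ext (TB k wb wf F)) openUnitDisc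
  refine (Tfun_analytic F.2 (k := k) (wb := wb) (wf := wf)).congr isOpen_disc ?_
  intro z hz
  rw [ext_eq _ hz]
  simp [TB]
  rfl

/-- The operator on the space of analytic bounded functions. -/
noncomputable def TA (k : ℕ) (wb wf : ℝ) : ↥Aset → ↥Aset :=
  fun F => ⟨TB k wb wf F, TB_mem k wb wf F⟩

end Stmt6Aux

theorem stmt_6 (k : ℕ) (wb wf : ℝ) (hk : 0 < k) (hw : |wb| + |wf| < 1) :
    ∃ f : ℂ → ℂ, IsSolution k wb wf f ∧
      ∀ g : ℂ → ℂ, IsSolution k wb wf g → Set.EqOn g f openUnitDisc := by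
  classical
  open Stmt6Aux in
  have hw0 : (0 : ℝ) ≤ |wb| + |wf| := by positivity
  set K : NNReal := Real.toNNReal (|wb| + |wf|) with hKdef
  have hKcoe : (K : ℝ) = |wb| + |wf| := Real.coe_toNNReal _ hw0
  have hK1 : K < 1 := by
    rw [← NNReal.coe_lt_coe, hKcoe]
    simpa using hw
  haveI : Nonempty ↥Stmt6Aux.Aset := ⟨⟨0, Stmt6Aux.zero_mem_Aset⟩⟩
  haveI : CompleteSpace ↥Stmt6Aux.Aset := Stmt6Aux.isClosed_Aset.completeSpace_coe
  have hlip : LipschitzWith K (Stmt6Aux.TA k wb wf) := by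
    apply LipschitzWith.of_dist_le_mul
    intro F G
    rw [Subtype.dist_eq]
    show dist (Stmt6Aux.TB k wb wf F) (Stmt6Aux.TB k wb wf G) ≤ (K : ℝ) * dist F G
    have hd0 : (0 : ℝ) ≤ (K : ℝ) * dist F G := by positivity
    rw [BoundedContinuousFunction.dist_le hd0]
    intro z
    have hS : ∀ w ∈ openUnitDisc,
        ‖Stmt6Aux.ext F.1 w - Stmt6Aux.ext G.1 w‖ ≤ dist F G := by
      intro w hw'
      rw [Stmt6Aux.ext_eq _ hw', Stmt6Aux.ext_eq _ hw', ← Complex.dist_eq]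
      calc dist (F.1 ⟨w, hw'⟩) (G.1 ⟨w, hw'⟩) ≤ dist F.1 G.1 :=
            BoundedContinuousFunction.dist_coe_le_dist _
        _ = dist F G := (Subtype.dist_eq F G).symm
    have hkey := Stmt6Aux.abs_Tfun_sub_le (k := k) (wb := wb) (wf := wf)
      F.2 G.2 hS z.2
    calc dist (Stmt6Aux.TB k wb wf F z) (Stmt6Aux.TB k wb wf G z)
        = ‖Tfun k wb wf (Stmt6Aux.ext F.1) z -
            Tfun k wb wf (Stmt6Aux.ext G.1) z‖ := by
          rw [Complex.dist_eq]
          simp [Stmt6Aux.TB]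
          rfl
      _ ≤ (|wb| + |wf|) * dist F G := hkey
      _ = (K : ℝ) * dist F G := by rw [hKcoe]
  have hcw : ContractingWith K (Stmt6Aux.TA k wb wf) := ⟨hK1, hlip⟩
  set F₀ : ↥Stmt6Aux.Aset := hcw.fixedPoint (Stmt6Aux.TA k wb wf) with hF₀
  have hfix : Stmt6Aux.TA k wb wf F₀ = F₀ := hcw.fixedPoint_isFixedPt
  set f : ℂ → ℂ := Stmt6Aux.ext F₀.1 with hfdef
  have hfana : AnalyticOnNhd ℂ f openUnitDisc := F₀.2
  -- the fixed point equation
  have hfe : ∀ y ∈ openUnitDisc, f y = Tfun k wb wf f y := by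
    intro y hy
    have h1 : (Stmt6Aux.TA k wb wf F₀).1 = F₀.1 := congrArg Subtype.val hfix
    have h2 : Stmt6Aux.TB k wb wf F₀ ⟨y, hy⟩ = F₀.1 ⟨y, hy⟩ := by
      rw [show Stmt6Aux.TB k wb wf F₀ = (Stmt6Aux.TA k wb wf F₀).1 from rfl, h1]
    have h3 : Stmt6Aux.TB k wb wf F₀ ⟨y, hy⟩ = Tfun k wb wf f y := by
      simp [Stmt6Aux.TB, hfdef]
      rfl
    rw [hfdef, Stmt6Aux.ext_eq _ hy, ← h2, h3]
  -- main equation for f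
  have heqn : ∀ x : ℂ, ‖x‖ < 1 →
      2 * f (x ^ 2) = (wb : ℂ) * (f x + f (-x)) +
        (wf : ℂ) * x ^ 2 * (f (x ^ 6) - f (-x ^ 6)) + 2 * x ^ (2 * k) := by
    intro x hx
    have hx2 : x ^ 2 ∈ openUnitDisc := by
      show ‖x ^ 2‖ < 1
      rw [norm_pow]
      exact pow_lt_one₀ (norm_nonneg x) hx (by norm_num)
    have heq := hfe (x ^ 2) hx2
    rw [Stmt6Aux.Tfun] at heq
    rw [Stmt6Aux.evenPart_sq hfana hx] at heq
    rw [show ((x ^ 2) ^ 3 : ℂ) = x ^ 6 by ring] at heq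
    rw [show ((x ^ 2) ^ k : ℂ) = x ^ (2 * k) from (pow_mul x 2 k).symm] at heq
    linear_combination 2 * heq
  refine ⟨f, ⟨hfana, ⟨‖F₀.1‖, Stmt6Aux.ext_bound F₀.1⟩, heqn⟩, ?_⟩
  -- uniqueness
  rintro g ⟨hga, ⟨C, hgC⟩, hgeq⟩
  have hgcont : Continuous (fun z : ↥openUnitDisc => g z) :=
    ContinuousOn.restrict hga.continuousOn
  set G : BoundedContinuousFunction ↥openUnitDisc ℂ :=
    BoundedContinuousFunction.ofNormedAddCommGroup _ hgcont C
      (fun z => by exact hgC z z.2) with hGdef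
  have hGcoe : ∀ {z : ℂ} (hz : z ∈ openUnitDisc), Stmt6Aux.ext G z = g z := by
    intro z hz
    rw [Stmt6Aux.ext_eq _ hz]
    simp [hGdef]
  have hGa : G ∈ Stmt6Aux.Aset := by
    show AnalyticOnNhd ℂ (Stmt6Aux.ext G) openUnitDisc
    refine hga.congr Stmt6Aux.isOpen_disc ?_
    intro z hz
    exact (hGcoe hz).symm
  have hGfix : Stmt6Aux.TA k wb wf ⟨G, hGa⟩ = ⟨G, hGa⟩ := by
    apply Subtype.ext
    apply BoundedContinuousFunction.ext
    rintro ⟨y, hy⟩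
    show Tfun k wb wf (Stmt6Aux.ext G) y = G ⟨y, hy⟩
    have hy' : ‖y‖ < 1 := hy
    obtain ⟨x, hx1, hx2⟩ := Stmt6Aux.exists_sqrt hy'
    have hext : AnalyticOnNhd ℂ (Stmt6Aux.ext G) openUnitDisc := hGa
    have hev : Stmt6Aux.evenPart (Stmt6Aux.ext G) y = (g x + g (-x)) / 2 := by
      rw [← hx1, Stmt6Aux.evenPart_sq hext hx2, hGcoe hx2,
        hGcoe (Stmt6Aux.neg_mem hx2)]
    have hy3 : y ^ 3 ∈ openUnitDisc := Stmt6Aux.cube_mem hy'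
    have hy3' : -(y ^ 3) ∈ openUnitDisc := Stmt6Aux.neg_mem hy3
    have hgval := hgeq x hx2
    have hG1 : G ⟨y, hy⟩ = g y := by simp [hGdef]
    rw [Stmt6Aux.Tfun]
    rw [hev, hGcoe hy3, hGcoe hy3', hG1]
    -- now pure algebra from the functional equation for g
    have e1 : y ^ 3 = x ^ 6 := by rw [← hx1]; ring
    have e2 : y ^ k = x ^ (2 * k) := by rw [← hx1, ← pow_mul]
    have e3 : y = x ^ 2 := hx1.symm
    rw [e1, e2, e3]
    linear_combination (-1/2 : ℂ) * hgval
  have hGF : (⟨G, hGa⟩ : ↥Stmt6Aux.Aset) = F₀ := hcw.fixedPoint_unique hGfix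
  intro z hz
  have : Stmt6Aux.ext G z = Stmt6Aux.ext F₀.1 z := by
    rw [show G = F₀.1 from congrArg Subtype.val hGF]
  rw [← hGcoe hz] at *
  exact this
end

section
/- Assume w_b, w_f are real with |w_b| + |w_f| < 1, and let f be a solution of the Collatz functional equation for (k, w_b, w_f). Then f(x) is real for every real x with |x| < 1; equivalently, all coefficients aₙ of f are real. -/
theorem stmt_7 (k : ℕ) (wb wf : ℝ) (f : ℂ → ℂ) (a : ℕ → ℂ)
    (hk : 0 < k) (hw : |wb| + |wf| < 1)
    (hf : IsSolution k wb wf f) (ha : HasCoeffs f a) :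
    (∀ x : ℝ, |x| < 1 → (f (x : ℂ)).im = 0) ∧ (∀ n : ℕ, (a n).im = 0) := by
  obtain ⟨hfa, ⟨C, hC⟩, heq⟩ := hf
  set q : ℝ := |wb| + |wf| with hqdef
  have hq0 : 0 ≤ q := by positivity
  set g : ℂ → ℂ := fun z => (starRingEnd ℂ) (f ((starRingEnd ℂ) z)) with hgdef
  set h : ℂ → ℂ := fun z => f z - g z with hhdef
  have habs : ∀ z : ℂ, ‖z‖ < 1 → ‖(starRingEnd ℂ) z‖ < 1 := by
    intro z hz; simpa using hz
  -- g satisfies the same functional equation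
  have hgeq : ∀ x : ℂ, ‖x‖ < 1 →
      2 * g (x ^ 2) = (wb : ℂ) * (g x + g (-x)) + (wf : ℂ) * x ^ 2 * (g (x ^ 6) - g (-x ^ 6))
        + 2 * x ^ (2 * k) := by
    intro x hx
    have e := congrArg (starRingEnd ℂ) (heq ((starRingEnd ℂ) x) (habs x hx))
    simp only [map_add, map_mul, map_sub, map_pow, map_neg, map_ofNat,
      Complex.conj_conj, Complex.conj_ofReal] at e
    simpa [hgdef, ← map_pow, ← map_neg] using e
  have hheq : ∀ x : ℂ, ‖x‖ < 1 →
      2 * h (x ^ 2) = (wb : ℂ) * (h x + h (-x)) + (wf : ℂ) * x ^ 2 * (h (x ^ 6) - h (-x ^ 6)) := by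
    intro x hx
    simp only [hhdef]
    linear_combination (heq x hx) - (hgeq x hx)
  -- sup norm of h
  set S : Set ℝ := (fun z => ‖h z‖) '' {z : ℂ | ‖z‖ < 1} with hSdef
  have hSne : S.Nonempty := ⟨_, ⟨(0 : ℂ), by simp, rfl⟩⟩
  have hSbdd : BddAbove S := by
    refine ⟨C + C, ?_⟩
    rintro _ ⟨z, hz, rfl⟩
    have h1 : ‖f z‖ ≤ C := hC z hz
    have h2 : ‖g z‖ ≤ C := by
      simpa [hgdef] using hC _ (habs z hz)
    calc ‖h z‖ ≤ ‖f z‖ + ‖g z‖ := by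
          simpa [hhdef, sub_eq_add_neg] using norm_add_le (f z) (-(g z))
      _ ≤ C + C := add_le_add h1 h2
  set M : ℝ := sSup S with hMdef
  have hle : ∀ z : ℂ, ‖z‖ < 1 → ‖h z‖ ≤ M :=
    fun z hz => le_csSup hSbdd ⟨z, hz, rfl⟩
  have hM0 : 0 ≤ M := le_trans (norm_nonneg (h 0)) (hle 0 (by simp))
  have key : ∀ w : ℂ, ‖w‖ < 1 → ‖h w‖ ≤ q * M := by
    intro w hw
    obtain ⟨x, hx⟩ := IsAlgClosed.exists_pow_nat_eq w (n := 2) two_pos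
    have hxlt : ‖x‖ < 1 := by
      by_contra hcon
      push_neg at hcon
      have : (1 : ℝ) ≤ ‖x ^ 2‖ := by
        rw [norm_pow]; exact one_le_pow₀ hcon
      rw [hx] at this; linarith
    have hb1 : ‖h x‖ ≤ M := hle x hxlt
    have hb2 : ‖h (-x)‖ ≤ M := hle _ (by simpa using hxlt)
    have h6 : ‖x ^ 6‖ < 1 := by
      rw [norm_pow]; exact pow_lt_one₀ (norm_nonneg _) hxlt (by norm_num)
    have hb3 : ‖h (x ^ 6)‖ ≤ M := hle _ h6
    have hb4 : ‖h (-x ^ 6)‖ ≤ M := hle _ (by simpa using h6)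
    have hx2 : ‖x ^ 2‖ ≤ 1 := by rw [hx]; exact hw.le
    have e := hheq x hxlt
    have t1 : ‖2 * h (x ^ 2)‖ ≤
        |wb| * (‖h x‖ + ‖h (-x)‖) +
        |wf| * ‖x ^ 2‖ * (‖h (x ^ 6)‖ + ‖h (-x ^ 6)‖) := by
      rw [e]
      calc ‖(wb : ℂ) * (h x + h (-x)) + (wf : ℂ) * x ^ 2 * (h (x ^ 6) - h (-x ^ 6))‖
          ≤ ‖(wb : ℂ) * (h x + h (-x))‖ +
            ‖(wf : ℂ) * x ^ 2 * (h (x ^ 6) - h (-x ^ 6))‖ :=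
            norm_add_le _ _
        _ ≤ |wb| * (‖h x‖ + ‖h (-x)‖) +
            |wf| * ‖x ^ 2‖ * (‖h (x ^ 6)‖ + ‖h (-x ^ 6)‖) := by
            rw [norm_mul, norm_mul, norm_mul, Complex.norm_real, Complex.norm_real, Real.norm_eq_abs, Real.norm_eq_abs]
            gcongr
            · exact norm_add_le _ _
            · simpa [sub_eq_add_neg] using norm_add_le (h (x ^ 6)) (-(h (-x ^ 6)))
    have t2 : ‖2 * h (x ^ 2)‖ = 2 * ‖h (x ^ 2)‖ := by
      rw [norm_mul]; norm_num
    rw [t2] at t1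
    have hwfx : |wf| * ‖x ^ 2‖ ≤ |wf| := by
      nlinarith [abs_nonneg wf, norm_nonneg (x ^ 2)]
    have u1 : |wb| * (‖h x‖ + ‖h (-x)‖) ≤ |wb| * (M + M) :=
      mul_le_mul_of_nonneg_left (add_le_add hb1 hb2) (abs_nonneg wb)
    have u2 : |wf| * ‖x ^ 2‖ * (‖h (x ^ 6)‖ + ‖h (-x ^ 6)‖)
        ≤ |wf| * (M + M) :=
      mul_le_mul hwfx (add_le_add hb3 hb4)
        (add_nonneg (norm_nonneg _) (norm_nonneg _)) (abs_nonneg wf)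
    rw [← hx]
    nlinarith [t1, u1, u2]
  have hMle : M ≤ q * M := by
    apply csSup_le hSne
    rintro _ ⟨z, hz, rfl⟩
    exact key z hz
  have hM : M = 0 := by nlinarith
  have hzero : ∀ z : ℂ, ‖z‖ < 1 → f z = g z := by
    intro z hz
    have := hle z hz
    rw [hM] at this
    have : ‖h z‖ = 0 := le_antisymm this (norm_nonneg _)
    have := norm_eq_zero.mp this
    simpa [hhdef, sub_eq_zero] using this
  have hsym : ∀ z : ℂ, ‖z‖ < 1 → (starRingEnd ℂ) (f ((starRingEnd ℂ) z)) = f z :=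
    fun z hz => (hzero z hz).symm
  constructor
  · intro x hx
    have hx' : ‖(x : ℂ)‖ < 1 := by simpa using hx
    have := hsym (x : ℂ) hx'
    rw [Complex.conj_ofReal] at this
    exact Complex.conj_eq_iff_im.mp this
  · -- conjugate coefficients also work
    have hb : HasCoeffs f (fun n => (starRingEnd ℂ) (a n)) := by
      intro x hx
      have hs := (ha ((starRingEnd ℂ) x) (habs x hx)).map (starRingEnd ℂ) Complex.continuous_conj
      simp only [Function.comp_def, map_mul, map_pow, Complex.conj_conj] at hs
      simpa [hsym x hx] using hs
    have hps : ∀ c : ℕ → ℂ, HasCoeffs f c →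
        HasFPowerSeriesAt f
          (fun n => ContinuousMultilinearMap.mkPiRing ℂ (Fin n) (c n)) 0 := by
      intro c hc
      refine ⟨1, ?_, by norm_num, ?_⟩
      · apply ENNReal.le_of_forall_nnreal_lt
        intro r hr
        apply FormalMultilinearSeries.le_radius_of_summable
        have hrlt : ‖((r : ℝ) : ℂ)‖ < 1 := by
          rw [Complex.norm_real, Real.norm_eq_abs]
          simpa [abs_of_nonneg r.coe_nonneg] using (by exact_mod_cast hr : (r : ℝ) < 1)
        have := (summable_norm_iff.mpr (hc ((r : ℝ) : ℂ) hrlt).summable)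
        simpa [ContinuousMultilinearMap.norm_mkPiRing, norm_mul, norm_pow,
          Complex.norm_real, abs_of_nonneg r.coe_nonneg] using this
      · intro y hy
        rw [mem_emetric_ball_zero_iff] at hy
        have hy1 : ‖y‖ < 1 := by
          have : (‖y‖₊ : ℝ) < 1 := by rw [enorm_eq_nnnorm] at hy; exact_mod_cast hy
          simpa using this
        have := hc y hy1
        simpa [ContinuousMultilinearMap.mkPiRing_apply, Finset.prod_const,
          smul_eq_mul, mul_comm, zero_add] using this
    have := (hps a ha).eq_formalMultilinearSeries (hps _ hb)
    intro n
    have hn := congrFun this n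
    have := congrFun (congrArg DFunLike.coe hn) (fun _ => (1 : ℂ))
    simp only [ContinuousMultilinearMap.mkPiRing_apply, Finset.prod_const, one_pow,
      one_smul] at this
    exact Complex.conj_eq_iff_im.mp this.symm
end

section
/- Assume 0 ≤ w_b, 0 ≤ w_f and w_b + w_f < 1, and let f be a solution of the Collatz functional equation for (k, w_b, w_f) with coefficients (aₙ). Then aₙ ≥ 0 (as a real number) for every n, and moreover a_k ≥ 1. -/
set_option maxRecDepth 8000

open Filter Metric

open Filter

lemma aux_ball {g : ℂ → ℂ} {c : ℕ → ℂ}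
    (h : ∀ x : ℂ, ‖x‖ < 1 → HasSum (fun n => c n * x ^ n) (g x)) :
    HasFPowerSeriesOnBall g (FormalMultilinearSeries.ofScalars ℂ c) 0 1 := by
  refine ⟨?_, one_pos, ?_⟩
  · apply ENNReal.le_of_forall_nnreal_lt
    intro r hr
    have hr1 : ‖(r : ℂ)‖ < 1 := by
      simpa using (by exact_mod_cast hr : (r : ℝ) < 1)
    have hs := ((h (r : ℂ) hr1).summable.tendsto_atTop_zero).norm
    apply (FormalMultilinearSeries.ofScalars ℂ c).le_radius_of_tendsto (l := 0)
    have hcoeff : ∀ n, (FormalMultilinearSeries.ofScalars ℂ c).coeff n = c n := fun n => by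
      simpa using FormalMultilinearSeries.ofScalars_apply_eq (E := ℂ) c 1 n
    simpa [hcoeff, norm_mul, norm_pow] using hs
  · intro y hy
    have hy1 : ‖y‖ < 1 := by
      exact ENNReal.ofReal_lt_one.mp (by rw [ofReal_norm]; exact mem_eball_zero_iff.mp hy)
    have := h y hy1
    simp only [FormalMultilinearSeries.ofScalars_apply_eq, smul_eq_mul, zero_add]
    exact this

lemma aux_zero {c : ℕ → ℂ}
    (h : ∀ x : ℂ, ‖x‖ < 1 → HasSum (fun n => c n * x ^ n) 0) :
    ∀ n, c n = 0 := by
  have hb : HasFPowerSeriesOnBall (fun _ : ℂ => 0) (FormalMultilinearSeries.ofScalars ℂ c) 0 1 :=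
    aux_ball h
  have := hb.hasFPowerSeriesAt.eq_zero
  intro n
  exact (FormalMultilinearSeries.ofScalars_series_eq_zero ℂ).mp this ▸ rfl


lemma aux_bound {f : ℂ → ℂ} {a : ℕ → ℂ} {C : ℝ} (hC : 0 ≤ C)
    (han : AnalyticOnNhd ℂ f {z : ℂ | ‖z‖ < 1})
    (hb : ∀ z : ℂ, ‖z‖ < 1 → ‖(f z)‖ ≤ C)
    (ha : ∀ x : ℂ, ‖x‖ < 1 → HasSum (fun n => a n * x ^ n) (f x))
    (hball : HasFPowerSeriesOnBall f (FormalMultilinearSeries.ofScalars ℂ a) 0 1) :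
    ∀ n, ‖(a n)‖ ≤ C := by
  intro n
  have hcoeff : ∀ m, (FormalMultilinearSeries.ofScalars ℂ a).coeff m = a m := fun m => by
    simpa using FormalMultilinearSeries.ofScalars_apply_eq (E := ℂ) a 1 m
  have main : ∀ r : ℝ, 0 < r → r < 1 → ‖(a n)‖ * r ^ n ≤ C := by
    intro r hr0 hr1
    set rn : NNReal := ⟨r, hr0.le⟩ with hrn
    have hdiff : DifferentiableOn ℂ f (closedBall (0 : ℂ) rn) := by
      apply (han.mono ?_).differentiableOn
      intro z hz
      simp only [mem_closedBall, Complex.dist_eq, sub_zero] at hz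
      exact lt_of_le_of_lt (by exact hz) hr1
    have hcb := hdiff.hasFPowerSeriesOnBall (by exact_mod_cast hr0 : 0 < rn)
    have heq : FormalMultilinearSeries.ofScalars ℂ a = cauchyPowerSeries f 0 rn :=
      hball.hasFPowerSeriesAt.eq_formalMultilinearSeries hcb.hasFPowerSeriesAt
    have hnorm := norm_cauchyPowerSeries_le f 0 rn n
    have hint : (∫ θ : ℝ in (0)..2 * Real.pi, ‖f (circleMap 0 rn θ)‖) ≤ C * (2 * Real.pi) := by
      have h1 : ‖∫ θ : ℝ in (0)..2 * Real.pi, ‖f (circleMap 0 rn θ)‖‖ ≤ C * |2 * Real.pi - 0| := by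
        apply intervalIntegral.norm_integral_le_of_norm_le_const
        intro θ _
        have : ‖(circleMap 0 rn θ)‖ < 1 := by
          simpa [abs_of_nonneg hr0.le] using (show (rn : ℝ) < 1 from hr1)
        simpa [Real.norm_eq_abs, abs_of_nonneg (norm_nonneg _)] using
          hb _ this
      calc (∫ θ : ℝ in (0)..2 * Real.pi, ‖f (circleMap 0 rn θ)‖)
          ≤ ‖∫ θ : ℝ in (0)..2 * Real.pi, ‖f (circleMap 0 rn θ)‖‖ := le_abs_self _
        _ ≤ C * |2 * Real.pi - 0| := h1
        _ = C * (2 * Real.pi) := by rw [sub_zero, abs_of_pos Real.two_pi_pos]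
    have hn2 : ‖(FormalMultilinearSeries.ofScalars ℂ a) n‖ ≤ C * (r⁻¹) ^ n := by
      rw [heq]
      refine hnorm.trans ?_
      have : ((2 * Real.pi)⁻¹ * ∫ θ : ℝ in (0)..2 * Real.pi, ‖f (circleMap 0 rn θ)‖) ≤ C := by
        rw [inv_mul_le_iff₀ Real.two_pi_pos]
        linarith [hint]
      have habs : |(rn : ℝ)|⁻¹ ^ n = (r⁻¹) ^ n := by
        simp [show |(rn : ℝ)| = r from abs_of_nonneg hr0.le]
      rw [habs]
      exact mul_le_mul_of_nonneg_right this (by positivity)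
    have : ‖a n‖ ≤ C * (r⁻¹) ^ n := by
      rw [← hcoeff n, ← FormalMultilinearSeries.norm_apply_eq_norm_coef]
      exact hn2
    calc ‖(a n)‖ * r ^ n ≤ (C * (r⁻¹) ^ n) * r ^ n :=
          mul_le_mul_of_nonneg_right this (by positivity)
      _ = C := by rw [mul_assoc, ← mul_pow, inv_mul_cancel₀ hr0.ne', one_pow, mul_one]
  have htend : Tendsto (fun r : ℝ => ‖(a n)‖ * r ^ n) (nhdsWithin 1 (Set.Iio 1))
      (nhds (‖(a n)‖ * 1 ^ n)) :=
    ((continuous_const.mul (continuous_pow n)).tendsto 1).mono_left nhdsWithin_le_nhds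
  have hev : ∀ᶠ r in nhdsWithin (1:ℝ) (Set.Iio 1), ‖(a n)‖ * r ^ n ≤ C := by
    filter_upwards [self_mem_nhdsWithin,
      eventually_nhdsWithin_of_eventually_nhds (eventually_gt_nhds (by norm_num : (0:ℝ) < 1))]
      with r hr1 hr0
    exact main r hr0 hr1
  have := le_of_tendsto htend hev
  simpa using this


lemma aux_hasSum_congr {β : Type*} [AddCommMonoid β] [TopologicalSpace β] {f g : ℕ → β} {s : β}
    (h : HasSum f s) (he : ∀ n, g n = f n) : HasSum g s := by
  rwa [show g = f from funext he]

lemma aux_key {k : ℕ} {wb wf : ℝ} {f : ℂ → ℂ} {a : ℕ → ℂ}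
    (hfe : ∀ x : ℂ, ‖x‖ < 1 →
      2 * f (x ^ 2) =
        (wb : ℂ) * (f x + f (-x)) + (wf : ℂ) * x ^ 2 * (f (x ^ 6) - f (-x ^ 6)) +
          2 * x ^ (2 * k))
    (ha : ∀ x : ℂ, ‖x‖ < 1 → HasSum (fun n => a n * x ^ n) (f x)) :
    ∀ m : ℕ, a m = (if m = k then 1 else 0) + (wb : ℂ) * a (2 * m) +
      (if m % 6 = 4 then (wf : ℂ) * a ((m - 1) / 3) else 0) := by
  set L : ℕ → ℂ := fun n => if 2 ∣ n then 2 * a (n / 2) else 0 with hL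
  set R1 : ℕ → ℂ := fun n => (wb : ℂ) * (a n + a n * (-1) ^ n) with hR1
  set R2 : ℕ → ℂ := fun n => if n % 6 = 2 then
      (wf : ℂ) * (a ((n - 2) / 6) - a ((n - 2) / 6) * (-1) ^ ((n - 2) / 6)) else 0 with hR2
  set R3 : ℕ → ℂ := fun n => if n = 2 * k then 2 else 0 with hR3
  have hcoe : ∀ n, L n - (R1 n + R2 n + R3 n) = 0 := by
    apply aux_zero
    intro x hx
    have hx2 : ‖(x ^ 2)‖ < 1 := by
      rw [norm_pow]; exact pow_lt_one₀ (norm_nonneg x) hx two_ne_zero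
    have hx6 : ‖(x ^ 6)‖ < 1 := by
      rw [norm_pow]; exact pow_lt_one₀ (norm_nonneg x) hx (by norm_num)
    have hxn : ‖(-x)‖ < 1 := by rwa [norm_neg]
    have hxn6 : ‖(-x ^ 6)‖ < 1 := by rwa [norm_neg]
    have hLsum : HasSum (fun n => L n * x ^ n) (2 * f (x ^ 2)) := by
      have hinj : Function.Injective (fun m : ℕ => 2 * m) := fun p q hpq => by
        simpa using hpq
      have hvan : ∀ n ∉ Set.range (fun m : ℕ => 2 * m), L n * x ^ n = 0 := by
        intro n hn
        have hnd : ¬ (2 ∣ n) := by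
          rintro ⟨t, ht⟩; exact hn ⟨t, ht.symm⟩
        simp [hL, hnd]
      refine (hinj.hasSum_iff hvan).mp ?_
      refine aux_hasSum_congr ((ha (x ^ 2) hx2).mul_left 2) ?_
      intro n
      show L (2 * n) * x ^ (2 * n) = 2 * (a n * (x ^ 2) ^ n)
      have : (2 * n) / 2 = n := by omega
      simp only [hL, dvd_mul_right, if_pos, this, ← pow_mul]
      ring
    have hR1sum : HasSum (fun n => R1 n * x ^ n) ((wb : ℂ) * (f x + f (-x))) := by
      refine aux_hasSum_congr (((ha x hx).add (ha (-x) hxn)).mul_left (wb : ℂ)) ?_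
      intro n
      rw [neg_pow x n]
      simp only [hR1]
      ring
    have hR2sum : HasSum (fun n => R2 n * x ^ n)
        ((wf : ℂ) * x ^ 2 * (f (x ^ 6) - f (-x ^ 6))) := by
      have hinj : Function.Injective (fun m : ℕ => 6 * m + 2) := fun p q hpq => by
        simpa using hpq
      have hvan : ∀ n ∉ Set.range (fun m : ℕ => 6 * m + 2), R2 n * x ^ n = 0 := by
        intro n hn
        have hnd : ¬ (n % 6 = 2) := by
          intro hmod; exact hn ⟨n / 6, by exact (by omega : 6 * (n / 6) + 2 = n)⟩
        simp [hR2, hnd]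
      refine (hinj.hasSum_iff hvan).mp ?_
      refine aux_hasSum_congr
        (((ha (x ^ 6) hx6).sub (ha (-x ^ 6) hxn6)).mul_left ((wf : ℂ) * x ^ 2)) ?_
      intro n
      show R2 (6 * n + 2) * x ^ (6 * n + 2) =
        (wf : ℂ) * x ^ 2 * (a n * (x ^ 6) ^ n - a n * (-x ^ 6) ^ n)
      have h1 : (6 * n + 2) % 6 = 2 := by omega
      have h2 : (6 * n + 2 - 2) / 6 = n := by omega
      rw [neg_pow (x ^ 6) n]
      simp only [hR2, h1, h2, reduceIte]
      rw [pow_add, ← pow_mul]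
      ring
    have hR3sum : HasSum (fun n => R3 n * x ^ n) (2 * x ^ (2 * k)) := by
      refine aux_hasSum_congr (hasSum_ite_eq (2 * k) ((2 : ℂ) * x ^ (2 * k))) ?_
      intro n
      simp only [hR3]
      by_cases hn : n = 2 * k
      · simp [hn]
      · simp [hn]
    have hzero := hLsum.sub ((hR1sum.add hR2sum).add hR3sum)
    rw [hfe x hx, sub_self] at hzero
    refine aux_hasSum_congr hzero ?_
    intro n
    ring
  intro m
  have h := hcoe (2 * m)
  rw [sub_eq_zero] at h
  have hLv : L (2 * m) = 2 * a m := by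
    have : (2 * m) / 2 = m := by omega
    simp [hL, dvd_mul_right, this]
  have hR1v : R1 (2 * m) = (wb : ℂ) * (a (2 * m) + a (2 * m)) := by
    simp [hR1, pow_mul]
  have hR3v : R3 (2 * m) = if m = k then 2 else 0 := by
    by_cases hmk : m = k
    · simp [hR3, hmk]
    · have hne : 2 * m ≠ 2 * k := by omega
      simp [hR3, hne, hmk]
  have hR2v : R2 (2 * m) = 2 * (if m % 6 = 4 then (wf : ℂ) * a ((m - 1) / 3) else 0) := by
    by_cases h4 : m % 6 = 4
    · have hmod : (2 * m) % 6 = 2 := by omega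
      have hq : (2 * m - 2) / 6 = (m - 1) / 3 := by omega
      have hodd : Odd ((m - 1) / 3) := ⟨(m - 4) / 6, by omega⟩
      simp only [hR2, hmod, if_pos, hq, if_pos h4, hodd.neg_one_pow]
      ring
    · simp only [hR2, if_neg h4]
      by_cases h1 : (2 * m) % 6 = 2
      · have heven : Even ((2 * m - 2) / 6) := ⟨(2 * m - 2) / 12, by omega⟩
        simp [if_pos h1, heven.neg_one_pow]
      · simp [if_neg h1]
  rw [hLv, hR1v, hR2v, hR3v] at h
  apply mul_left_cancel₀ (two_ne_zero (α := ℂ))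
  rw [h]
  split_ifs <;> ring



theorem stmt_9 (k : ℕ) (wb wf : ℝ) (f : ℂ → ℂ) (a : ℕ → ℂ) (hk : 0 < k)
    (hwb : 0 ≤ wb) (hwf : 0 ≤ wf) (hw : wb + wf < 1)
    (hf : IsSolution k wb wf f) (ha : HasCoeffs f a) :
    (∀ n : ℕ, (a n).im = 0 ∧ 0 ≤ (a n).re) ∧ 1 ≤ (a k).re := by
  obtain ⟨han, ⟨C0, hC0⟩, hfe⟩ := hf
  set C : ℝ := max C0 0 with hCdef
  have hCnn : 0 ≤ C := le_max_right _ _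
  have hb : ∀ z : ℂ, ‖z‖ < 1 → ‖(f z)‖ ≤ C := fun z hz =>
    (hC0 z hz).trans (le_max_left _ _)
  have hball := aux_ball ha
  have hbound := aux_bound hCnn han hb ha hball
  have key := aux_key hfe ha
  set w : ℝ := wb + wf with hwdef
  have hw0 : 0 ≤ w := by positivity
  have approx : ∀ N n : ℕ, ∃ s : ℝ, 0 ≤ s ∧ (N ≠ 0 → n = k → 1 ≤ s) ∧
      ‖(a n - (s : ℂ))‖ ≤ C * w ^ N := by
    intro N
    induction N with
    | zero =>
      intro n
      exact ⟨0, le_refl _, fun h => absurd rfl h, by simpa using hbound n⟩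
    | succ N ih =>
      intro n
      obtain ⟨s1, hs10, _, hs1⟩ := ih (2 * n)
      obtain ⟨s2, hs20, _, hs2⟩ := ih ((n - 1) / 3)
      have t1 : 0 ≤ (if n = k then (1 : ℝ) else 0) := by split_ifs <;> norm_num
      have t2 : 0 ≤ wb * s1 := mul_nonneg hwb hs10
      have t3 : 0 ≤ (if n % 6 = 4 then wf * s2 else 0) := by
        split_ifs
        · exact mul_nonneg hwf hs20
        · exact le_refl _
      refine ⟨(if n = k then 1 else 0) + wb * s1 + (if n % 6 = 4 then wf * s2 else 0),
        by linarith, ?_, ?_⟩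
      · intro _ hnk
        rw [if_pos hnk]
        linarith
      · have hsplit : a n - (((if n = k then (1 : ℝ) else 0) + wb * s1 +
            (if n % 6 = 4 then wf * s2 else 0) : ℝ) : ℂ) =
            (wb : ℂ) * (a (2 * n) - (s1 : ℂ)) +
              (if n % 6 = 4 then (wf : ℂ) * (a ((n - 1) / 3) - (s2 : ℂ)) else 0) := by
          rw [key n]
          push_cast [apply_ite (fun r : ℝ => (r : ℂ))]
          split_ifs <;> ring
        have ht : 0 ≤ C * w ^ N := by positivity
        have e1 : ‖((wb : ℂ) * (a (2 * n) - (s1 : ℂ)))‖ =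
            wb * ‖(a (2 * n) - (s1 : ℂ))‖ := by
          rw [norm_mul, Complex.norm_real, Real.norm_eq_abs, abs_of_nonneg hwb]
        have hpow : C * w ^ (N + 1) = (wb + wf) * (C * w ^ N) := by
          rw [pow_succ, hwdef]; ring
        by_cases h4 : n % 6 = 4
        · rw [hsplit, if_pos h4]
          refine (norm_add_le _ _).trans ?_
          have e2 : ‖((wf : ℂ) * (a ((n - 1) / 3) - (s2 : ℂ)))‖ =
              wf * ‖(a ((n - 1) / 3) - (s2 : ℂ))‖ := by
            rw [norm_mul, Complex.norm_real, Real.norm_eq_abs, abs_of_nonneg hwf]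
          rw [e1, e2, hpow]
          nlinarith [mul_le_mul_of_nonneg_left hs1 hwb, mul_le_mul_of_nonneg_left hs2 hwf]
        · rw [hsplit, if_neg h4, add_zero, e1, hpow]
          nlinarith [mul_le_mul_of_nonneg_left hs1 hwb]
  have htend : Filter.Tendsto (fun N : ℕ => C * w ^ N) Filter.atTop (nhds 0) := by
    have h := tendsto_pow_atTop_nhds_zero_of_lt_one hw0 hw
    simpa using h.const_mul C
  have hmain : ∀ n : ℕ, (a n).im = 0 ∧ 0 ≤ (a n).re := by
    intro n
    constructor
    · have him : ∀ N : ℕ, |(a n).im| ≤ C * w ^ N := by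
        intro N
        obtain ⟨s, _, _, hs⟩ := approx N n
        have h1 : |(a n - (s : ℂ)).im| ≤ ‖(a n - (s : ℂ))‖ := Complex.abs_im_le_norm _
        have h2 : (a n - (s : ℂ)).im = (a n).im := by simp
        rw [h2] at h1
        exact h1.trans hs
      have : |(a n).im| ≤ 0 := ge_of_tendsto' htend him
      exact abs_eq_zero.mp (le_antisymm this (abs_nonneg _))
    · have hre : ∀ N : ℕ, -(a n).re ≤ C * w ^ N := by
        intro N
        obtain ⟨s, hs0, _, hs⟩ := approx N n
        have h1 : ((s : ℂ) - a n).re ≤ ‖((s : ℂ) - a n)‖ := Complex.re_le_norm _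
        rw [← neg_sub, norm_neg] at h1
        have h2 : (-(a n - (s : ℂ))).re = s - (a n).re := by simp
        rw [h2] at h1
        have := h1.trans hs
        linarith
      have : -(a n).re ≤ 0 := ge_of_tendsto' htend hre
      linarith
  refine ⟨hmain, ?_⟩
  have htend1 : Filter.Tendsto (fun N : ℕ => C * w ^ (N + 1)) Filter.atTop (nhds 0) :=
    htend.comp (Filter.tendsto_add_atTop_nat 1)
  have hre : ∀ N : ℕ, 1 - (a k).re ≤ C * w ^ (N + 1) := by
    intro N
    obtain ⟨s, _, hs1, hs⟩ := approx (N + 1) k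
    have hs1' : 1 ≤ s := hs1 (Nat.succ_ne_zero N) rfl
    have h1 : ((s : ℂ) - a k).re ≤ ‖((s : ℂ) - a k)‖ := Complex.re_le_norm _
    rw [← neg_sub, norm_neg] at h1
    have h2 : (-(a k - (s : ℂ))).re = s - (a k).re := by simp
    rw [h2] at h1
    have := h1.trans hs
    linarith
  have : 1 - (a k).re ≤ 0 := ge_of_tendsto' htend1 hre
  linarith
end

section
/- Assume 0 < w_b, 0 < w_f and w_b + w_f < 1, and let f be a solution of the Collatz functional equation for (k, w_b, w_f) with coefficients (aₙ). If a positive integer n lies in the Collatz orbit of k, i.e. Col^[i](k) = n for some i ≥ 0, then aₙ > 0. -/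
/-- The Collatz map: `3n+1` on odd numbers, `n/2` on even numbers. -/
def Col (n : ℕ) : ℕ := if n % 2 = 1 then 3 * n + 1 else n / 2



open Filter

lemma hasFPS_of_coeffs (g : ℂ → ℂ) (c : ℕ → ℂ)
    (h : ∀ x : ℂ, ‖x‖ < 1 → HasSum (fun n => c n * x ^ n) (g x)) :
    HasFPowerSeriesOnBall g (FormalMultilinearSeries.ofScalars ℂ c) 0 1 := by
  constructor
  · refine ENNReal.le_of_forall_nnreal_lt fun r hr => ?_
    have hr1 : ‖(r : ℂ)‖ < 1 := by
      simpa using (by exact_mod_cast hr : (r : ℝ) < 1)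
    have hs := (h (r : ℂ) hr1).summable.tendsto_atTop_zero
    refine FormalMultilinearSeries.le_radius_of_tendsto _ (l := 0) ?_
    have : (fun n => ‖FormalMultilinearSeries.ofScalars ℂ c n‖ * (r : ℝ) ^ n)
        = fun n => ‖c n * (r : ℂ) ^ n‖ := by
      funext n
      rw [FormalMultilinearSeries.ofScalars_norm, norm_mul, norm_pow]
      simp
    rw [this]
    simpa using hs.norm
  · exact one_pos
  · intro y hy
    have hy' : ‖y‖ < 1 := by
      have h1 : ‖y‖₊ < 1 := by simpa [enorm_eq_nnnorm] using hy
      exact_mod_cast h1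
    have := h y hy'
    simp only [zero_add]
    simpa [FormalMultilinearSeries.coeff, FormalMultilinearSeries.ofScalars, smul_eq_mul, mul_comm] using this



open NNReal

lemma coeffs_unique {g : ℂ → ℂ} {b c : ℕ → ℂ}
    (hb : ∀ x : ℂ, ‖x‖ < 1 → HasSum (fun n => b n * x ^ n) (g x))
    (hc : ∀ x : ℂ, ‖x‖ < 1 → HasSum (fun n => c n * x ^ n) (g x)) :
    b = c := by
  have h1 := (hasFPS_of_coeffs g b hb).hasFPowerSeriesAt
  have h2 := (hasFPS_of_coeffs g c hc).hasFPowerSeriesAt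
  have hpq := h1.eq_formalMultilinearSeries h2
  funext n
  have := congrFun hpq n
  have h3 := congrFun (congrArg DFunLike.coe this) (fun _ : Fin n => (1 : ℂ))
  simpa [FormalMultilinearSeries.ofScalars, smul_eq_mul] using h3

lemma coeff_bound {g : ℂ → ℂ} {c : ℕ → ℂ} {C : ℝ}
    (hg : AnalyticOnNhd ℂ g {z : ℂ | ‖z‖ < 1})
    (hC : ∀ z : ℂ, ‖z‖ < 1 → ‖g z‖ ≤ C)
    (h : ∀ x : ℂ, ‖x‖ < 1 → HasSum (fun n => c n * x ^ n) (g x)) :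
    ∀ n, ‖c n‖ ≤ C := by
  intro n
  have key : ∀ r : ℝ≥0, 0 < (r : ℝ) → (r : ℝ) < 1 →
      ‖c n‖ * (r : ℝ) ^ n ≤ C := by
    intro r hr0 hr1
    have hd : DifferentiableOn ℂ g (Metric.closedBall (0:ℂ) r) := by
      intro z hz
      have hz1 : ‖z‖ < 1 := by
        have hz' : ‖z‖ ≤ (r : ℝ) := by
          simpa [dist_zero_right] using Metric.mem_closedBall.mp hz
        exact lt_of_le_of_lt hz' hr1
      exact (hg z hz1).differentiableAt.differentiableWithinAt
    have hcau := hd.hasFPowerSeriesOnBall (by exact_mod_cast hr0)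
    have heq := (hasFPS_of_coeffs g c h).hasFPowerSeriesAt.eq_formalMultilinearSeries
      hcau.hasFPowerSeriesAt
    have hnorm : ‖c n‖ = ‖cauchyPowerSeries g 0 r n‖ := by
      rw [← heq, FormalMultilinearSeries.ofScalars_norm]
    have hb := norm_cauchyPowerSeries_le g 0 r n
    rw [← hnorm] at hb
    have hint : (∫ θ : ℝ in (0:ℝ)..2 * Real.pi, ‖g (circleMap 0 r θ)‖) ≤ 2 * Real.pi * C := by
      have hb2 : ‖∫ θ : ℝ in (0:ℝ)..2 * Real.pi, ‖g (circleMap 0 r θ)‖‖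
          ≤ C * |2 * Real.pi - 0| := by
        apply intervalIntegral.norm_integral_le_of_norm_le_const
        intro x _
        rw [Real.norm_eq_abs, abs_of_nonneg (norm_nonneg _)]
        apply hC
        have : ‖circleMap 0 r x‖ = r := by
          simp [circleMap, map_mul, abs_of_nonneg r.coe_nonneg]
        rw [this]; exact hr1
      calc (∫ θ : ℝ in (0:ℝ)..2 * Real.pi, ‖g (circleMap 0 r θ)‖)
          ≤ ‖∫ θ : ℝ in (0:ℝ)..2 * Real.pi, ‖g (circleMap 0 r θ)‖‖ := le_abs_self _
        _ ≤ C * |2 * Real.pi - 0| := hb2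
        _ = 2 * Real.pi * C := by
            rw [sub_zero, abs_of_nonneg Real.two_pi_pos.le]; ring
    have h2 : ‖c n‖ ≤ ((2 * Real.pi)⁻¹ * (2 * Real.pi * C)) * |(r:ℝ)|⁻¹ ^ n := by
      refine hb.trans ?_
      apply mul_le_mul_of_nonneg_right _ (by positivity)
      exact mul_le_mul_of_nonneg_left hint (by positivity)
    rw [inv_mul_cancel_left₀ Real.two_pi_pos.ne'] at h2
    rw [abs_of_nonneg r.coe_nonneg] at h2
    calc ‖c n‖ * (r:ℝ) ^ n ≤ (C * ((r:ℝ)⁻¹) ^ n) * (r:ℝ) ^ n :=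
          mul_le_mul_of_nonneg_right h2 (by positivity)
      _ = C := by
          rw [mul_assoc, ← mul_pow, inv_mul_cancel₀ hr0.ne']
          simp
  -- take limit r → 1
  set rj : ℕ → ℝ≥0 := fun j => ⟨(j+1)/(j+2), by positivity⟩ with hrj
  have hco : ∀ j, ((rj j : ℝ≥0) : ℝ) = (j+1)/(j+2) := fun j => rfl
  have h1 : Filter.Tendsto (fun j : ℕ => ((rj j : ℝ≥0) : ℝ)) Filter.atTop (nhds 1) := by
    simp only [hco]
    have heq2 : ∀ j : ℕ, ((j:ℝ)+1)/(j+2) = 1 - 1/(j+2) := by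
      intro j
      have : (j:ℝ)+2 ≠ 0 := by positivity
      field_simp
      ring
    simp only [heq2]
    have ht : Filter.Tendsto (fun j : ℕ => ((j:ℝ)+2)) Filter.atTop Filter.atTop :=
      Filter.tendsto_atTop_add_const_right _ 2 tendsto_natCast_atTop_atTop
    have := Filter.Tendsto.const_sub (1:ℝ) ht.inv_tendsto_atTop
    simpa using this
  have hlim : Filter.Tendsto (fun j : ℕ => ‖c n‖ * ((rj j : ℝ≥0) : ℝ) ^ n)
      Filter.atTop (nhds (‖c n‖)) := by
    have := (h1.pow n).const_mul (‖c n‖)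
    simpa using this
  refine le_of_tendsto hlim ?_
  filter_upwards with j
  apply key
  · rw [hco]; positivity
  · rw [hco]
    rw [div_lt_one (by positivity)]
    norm_num

lemma recurrence {k : ℕ} {wb wf : ℝ} {f : ℂ → ℂ} {a : ℕ → ℂ} (hk : 0 < k)
    (hfe : ∀ x : ℂ, ‖x‖ < 1 →
      2 * f (x ^ 2) = (wb : ℂ) * (f x + f (-x)) + (wf : ℂ) * x ^ 2 * (f (x ^ 6) - f (-x ^ 6))
        + 2 * x ^ (2 * k))
    (ha : ∀ x : ℂ, ‖x‖ < 1 → HasSum (fun n => a n * x ^ n) (f x)) (n : ℕ) :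
    a n = (wb : ℂ) * a (2 * n)
      + (if n % 3 = 1 ∧ ((n - 1) / 3) % 2 = 1 then (wf : ℂ) * a ((n - 1) / 3) else 0)
      + (if n = k then 1 else 0) := by
  classical
  set c1 : ℕ → ℂ := fun m => if 2 ∣ m then 2 * a (m / 2) else 0 with hc1
  set c2 : ℕ → ℂ := fun m => if 2 ∣ m then 2 * (wb : ℂ) * a m else 0 with hc2
  set c3 : ℕ → ℂ := fun m =>
    if m % 6 = 2 ∧ ((m - 2) / 6) % 2 = 1 then 2 * (wf : ℂ) * a ((m - 2) / 6) else 0 with hc3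
  set c4 : ℕ → ℂ := fun m => if m = 2 * k then 2 else 0 with hc4
  have hL : ∀ x : ℂ, ‖x‖ < 1 →
      HasSum (fun m => c1 m * x ^ m) (2 * f (x ^ 2)) := by
    intro x hx
    have hx2 : ‖x ^ 2‖ < 1 := by
      rw [norm_pow]; exact pow_lt_one₀ (norm_nonneg x) hx (by norm_num)
    have h0 := (ha (x ^ 2) hx2).mul_left 2
    have hinj : Function.Injective (fun j : ℕ => 2 * j) := fun p q h => by simp only at h; omega
    refine (Function.Injective.hasSum_iff hinj ?_).mp ?_
    · intro m hm
      have h2 : ¬ 2 ∣ m := by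
        intro ⟨t, ht⟩
        exact hm ⟨t, show 2 * t = m by omega⟩
      simp only [hc1, h2, if_false, zero_mul]
    · refine h0.congr_fun fun j => ?_
      simp only [hc1, Function.comp_apply]
      rw [if_pos ⟨j, rfl⟩]
      have : 2 * j / 2 = j := by omega
      rw [this, ← pow_mul]
      ring
  have hR : ∀ x : ℂ, ‖x‖ < 1 →
      HasSum (fun m => (c2 m + c3 m + c4 m) * x ^ m) (2 * f (x ^ 2)) := by
    intro x hx
    have hx6 : ‖x ^ 6‖ < 1 := by
      rw [norm_pow]; exact pow_lt_one₀ (norm_nonneg x) hx (by norm_num)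
    have hxn : ‖-x‖ < 1 := by rwa [norm_neg]
    have hx6n : ‖-x ^ 6‖ < 1 := by rwa [norm_neg]
    -- piece 2
    have h2 : HasSum (fun m => c2 m * x ^ m) ((wb : ℂ) * (f x + f (-x))) := by
      have := ((ha x hx).add (ha (-x) hxn)).mul_left (wb : ℂ)
      refine this.congr_fun fun m => ?_
      simp only [hc2]
      rcases Nat.even_or_odd m with he | ho
      · rw [if_pos he.two_dvd, he.neg_pow]
        ring
      · rw [if_neg (by rwa [Nat.odd_iff, ← Nat.two_dvd_ne_zero] at ho), ho.neg_pow]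
        ring
    -- piece 3
    have h3 : HasSum (fun m => c3 m * x ^ m)
        ((wf : ℂ) * x ^ 2 * (f (x ^ 6) - f (-x ^ 6))) := by
      have h0 := ((ha (x ^ 6) hx6).sub (ha (-x ^ 6) hx6n)).mul_left ((wf : ℂ) * x ^ 2)
      have hinj : Function.Injective (fun j : ℕ => 6 * j + 2) := fun p q h => by simp only at h; omega
      refine (Function.Injective.hasSum_iff hinj ?_).mp ?_
      · intro m hm
        have h6 : ¬ (m % 6 = 2 ∧ ((m - 2) / 6) % 2 = 1) := by
          rintro ⟨hm6, -⟩
          exact hm ⟨m / 6, show 6 * (m / 6) + 2 = m by omega⟩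
        simp only [hc3, h6, if_false, zero_mul]
      · refine h0.congr_fun fun j => ?_
        simp only [hc3, Function.comp_apply]
        have e1 : (6 * j + 2) % 6 = 2 := by omega
        have e2 : (6 * j + 2 - 2) / 6 = j := by omega
        rcases Nat.even_or_odd j with he | ho
        · rw [if_neg (by rw [e2]; intro hj; rw [Nat.even_iff] at he; omega)]
          rw [he.neg_pow]
          ring
        · rw [if_pos ⟨e1, by rw [e2, ← Nat.odd_iff]; exact ho⟩, e2, ho.neg_pow]
          rw [pow_add, ← pow_mul]
          ring
    -- piece 4
    have h4 : HasSum (fun m => c4 m * x ^ m) (2 * x ^ (2 * k)) := by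
      have := hasSum_ite_eq (2 * k) (2 * x ^ (2 * k))
      refine this.congr_fun fun m => ?_
      simp only [hc4]
      by_cases hm : m = 2 * k
      · subst hm; simp
      · simp [hm]
    have := (h2.add h3).add h4
    rw [← hfe x hx] at this
    refine this.congr_fun fun m => by ring
  have huniq := coeffs_unique hL hR
  have hval := congrFun huniq (2 * n)
  simp only [hc1, hc2, hc3, hc4] at hval
  rw [if_pos ⟨n, rfl⟩, if_pos ⟨n, rfl⟩] at hval
  have e0 : 2 * n / 2 = n := by omega
  rw [e0] at hval
  -- translate c3 condition
  have e3 : (if 2 * n % 6 = 2 ∧ (2 * n - 2) / 6 % 2 = 1 then 2 * (wf : ℂ) * a ((2 * n - 2) / 6)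
      else 0) = if n % 3 = 1 ∧ ((n - 1) / 3) % 2 = 1 then 2 * (wf : ℂ) * a ((n - 1) / 3) else 0 := by
    have hiff : (2 * n % 6 = 2 ∧ (2 * n - 2) / 6 % 2 = 1) ↔ (n % 3 = 1 ∧ ((n - 1) / 3) % 2 = 1) := by
      constructor <;> rintro ⟨h1, h2⟩ <;> constructor <;> omega
    have heq : (2 * n - 2) / 6 = (n - 1) / 3 := by omega
    rw [heq]
    by_cases hcond : n % 3 = 1 ∧ ((n - 1) / 3) % 2 = 1
    · rw [if_pos hcond, if_pos ((by omega : (2*n-2)/6 = (n-1)/3) ▸ hiff.mpr hcond)]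
    · rw [if_neg hcond, if_neg (fun hc => hcond ((heq ▸ hiff).mp hc))]
  rw [e3] at hval
  have e4 : (if 2 * n = 2 * k then (2:ℂ) else 0) = if n = k then 2 else 0 := by
    by_cases hnk : n = k
    · simp [hnk]
    · rw [if_neg (by omega), if_neg hnk]
  rw [e4] at hval
  apply mul_left_cancel₀ (two_ne_zero' ℂ)
  rw [hval]
  split_ifs <;> ring

/-- real one-step backward transfer operator -/
def ColTR (wb wf : ℝ) (v : ℕ → ℝ) : ℕ → ℝ := fun m =>
  wb * v (2 * m) + (if m % 3 = 1 ∧ ((m - 1) / 3) % 2 = 1 then wf * v ((m - 1) / 3) else 0)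

/-- complex one-step backward transfer operator -/
def ColTC (wb wf : ℝ) (v : ℕ → ℂ) : ℕ → ℂ := fun m =>
  (wb : ℂ) * v (2 * m)
    + (if m % 3 = 1 ∧ ((m - 1) / 3) % 2 = 1 then (wf : ℂ) * v ((m - 1) / 3) else 0)

lemma ColTC_add (wb wf : ℝ) (v w : ℕ → ℂ) :
    ColTC wb wf (fun j => v j + w j) = fun m => ColTC wb wf v m + ColTC wb wf w m := by
  funext m
  simp only [ColTC]
  split_ifs <;> ring

lemma ColTC_coe (wb wf : ℝ) (v : ℕ → ℝ) :
    ColTC wb wf (fun j => ((v j : ℝ) : ℂ)) = fun m => ((ColTR wb wf v m : ℝ) : ℂ) := by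
  funext m
  simp only [ColTC, ColTR]
  split_ifs <;> push_cast <;> ring

lemma ColTC_iter_add (wb wf : ℝ) (L : ℕ) (v w : ℕ → ℂ) (m : ℕ) :
    (ColTC wb wf)^[L] (fun j => v j + w j) m = (ColTC wb wf)^[L] v m + (ColTC wb wf)^[L] w m := by
  induction L generalizing v w m with
  | zero => simp
  | succ L ih =>
    rw [Function.iterate_succ_apply, Function.iterate_succ_apply,
      Function.iterate_succ_apply, ColTC_add]
    exact ih _ _ m

lemma ColTC_iter_coe (wb wf : ℝ) (L : ℕ) (v : ℕ → ℝ) (m : ℕ) :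
    (ColTC wb wf)^[L] (fun j => ((v j : ℝ) : ℂ)) m = (((ColTR wb wf)^[L] v m : ℝ) : ℂ) := by
  induction L generalizing v m with
  | zero => simp
  | succ L ih =>
    rw [Function.iterate_succ_apply, Function.iterate_succ_apply, ColTC_coe]
    exact ih _ m

lemma ColTR_iter_nonneg {wb wf : ℝ} (hwb : 0 ≤ wb) (hwf : 0 ≤ wf) (L : ℕ) (v : ℕ → ℝ)
    (hv : ∀ m, 0 ≤ v m) (m : ℕ) : 0 ≤ (ColTR wb wf)^[L] v m := by
  induction L generalizing v m with
  | zero => exact hv m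
  | succ L ih =>
    rw [Function.iterate_succ_apply]
    refine ih _ (fun j => ?_) m
    simp only [ColTR]
    have h1 : 0 ≤ wb * v (2 * j) := mul_nonneg hwb (hv _)
    have h2 : (0:ℝ) ≤ if j % 3 = 1 ∧ ((j - 1) / 3) % 2 = 1 then wf * v ((j - 1) / 3) else 0 := by
      split_ifs
      · exact mul_nonneg hwf (hv _)
      · exact le_rfl
    linarith

lemma ColTC_iter_bound {wb wf C : ℝ} (hwb : 0 ≤ wb) (hwf : 0 ≤ wf) (L : ℕ) (v : ℕ → ℂ)
    (hC : 0 ≤ C) (hv : ∀ m, ‖v m‖ ≤ C) (m : ℕ) :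
    ‖(ColTC wb wf)^[L] v m‖ ≤ (wb + wf) ^ L * C := by
  induction L generalizing v C m with
  | zero => simpa using hv m
  | succ L ih =>
    rw [Function.iterate_succ_apply]
    have hstep : ∀ j, ‖ColTC wb wf v j‖ ≤ (wb + wf) * C := by
      intro j
      simp only [ColTC]
      refine (norm_add_le _ _).trans ?_
      have h1 : ‖(wb : ℂ) * v (2 * j)‖ ≤ wb * C := by
        rw [norm_mul, Complex.norm_real, Real.norm_eq_abs, abs_of_nonneg hwb]
        exact mul_le_mul_of_nonneg_left (hv _) hwb
      have h2 : ‖if j % 3 = 1 ∧ ((j - 1) / 3) % 2 = 1 then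
          (wf : ℂ) * v ((j - 1) / 3) else 0‖ ≤ wf * C := by
        split_ifs
        · rw [norm_mul, Complex.norm_real, Real.norm_eq_abs, abs_of_nonneg hwf]
          exact mul_le_mul_of_nonneg_left (hv _) hwf
        · simpa using mul_nonneg hwf hC
      linarith
    have := ih (ColTC wb wf v) (mul_nonneg (by linarith) hC) hstep m
    calc ‖(ColTC wb wf)^[L] (ColTC wb wf v) m‖ ≤ (wb + wf) ^ L * ((wb + wf) * C) := this
      _ = (wb + wf) ^ (L + 1) * C := by ring

lemma Col_pos {p : ℕ} (hp : 0 < p) : 0 < Col p := by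
  unfold Col
  split_ifs <;> omega

lemma Col_iter_pos {k : ℕ} (hk : 0 < k) (i : ℕ) : 0 < Col^[i] k := by
  induction i with
  | zero => exact hk
  | succ i ih => rw [Function.iterate_succ_apply']; exact Col_pos ih

/-- sequence of nonnegative contributions -/
def uSeq (k : ℕ) (wb wf : ℝ) (i : ℕ) : ℕ → ℝ :=
  (ColTR wb wf)^[i] (fun m => if m = k then 1 else 0)

lemma uSeq_nonneg {k : ℕ} {wb wf : ℝ} (hwb : 0 ≤ wb) (hwf : 0 ≤ wf) (i m : ℕ) :
    0 ≤ uSeq k wb wf i m := by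
  refine ColTR_iter_nonneg hwb hwf i _ (fun j => ?_) m
  split_ifs <;> norm_num

lemma uSeq_orbit {k : ℕ} {wb wf : ℝ} (hk : 0 < k) (hwb : 0 < wb) (hwf : 0 < wf)
    (i : ℕ) {m : ℕ} (hm : Col^[i] k = m) :
    (min wb wf) ^ i ≤ uSeq k wb wf i m := by
  induction i generalizing m with
  | zero =>
    subst hm
    simp [uSeq]
  | succ i ih =>
    set p := Col^[i] k with hp
    have hppos : 0 < p := Col_iter_pos hk i
    have hmCol : Col p = m := by
      rw [← hm, Function.iterate_succ_apply']
    have hu : uSeq k wb wf (i + 1) = ColTR wb wf (uSeq k wb wf i) := by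
      rw [uSeq, Function.iterate_succ_apply']
      rfl
    rw [hu]
    have hpi := ih (m := p) rfl
    have hnn : ∀ j, 0 ≤ uSeq k wb wf i j := uSeq_nonneg hwb.le hwf.le i
    have hεp : (0:ℝ) ≤ (min wb wf) ^ i := by positivity
    simp only [ColTR]
    rcases Nat.even_or_odd p with he | ho
    · -- p even : m = p / 2, 2 * m = p
      have he2 : p % 2 = 0 := Nat.even_iff.mp he
      have hm2 : 2 * m = p := by
        have hcp : Col p = p / 2 := by
          unfold Col
          rw [if_neg (by omega)]
        omega
      have h1 : (min wb wf) ^ (i+1) ≤ wb * uSeq k wb wf i (2 * m) := by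
        rw [hm2]
        calc (min wb wf) ^ (i+1) = min wb wf * (min wb wf) ^ i := by ring
          _ ≤ wb * uSeq k wb wf i p :=
            mul_le_mul (min_le_left _ _) hpi hεp hwb.le
      have h2 : (0:ℝ) ≤ if m % 3 = 1 ∧ ((m - 1) / 3) % 2 = 1 then
          wf * uSeq k wb wf i ((m - 1) / 3) else 0 := by
        split_ifs
        · exact mul_nonneg hwf.le (hnn _)
        · exact le_rfl
      linarith
    · -- p odd : m = 3 p + 1
      have hodd : p % 2 = 1 := Nat.odd_iff.mp ho
      have hm3 : m = 3 * p + 1 := by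
        rw [← hmCol]
        unfold Col
        rw [if_pos hodd]
      have hcond : m % 3 = 1 ∧ ((m - 1) / 3) % 2 = 1 := by omega
      have hpre : (m - 1) / 3 = p := by omega
      rw [if_pos hcond, hpre]
      have h1 : (min wb wf) ^ (i+1) ≤ wf * uSeq k wb wf i p := by
        calc (min wb wf) ^ (i+1) = min wb wf * (min wb wf) ^ i := by ring
          _ ≤ wf * uSeq k wb wf i p :=
            mul_le_mul (min_le_right _ _) hpi hεp hwf.le
      have h2 : (0:ℝ) ≤ wb * uSeq k wb wf i (2 * m) := mul_nonneg hwb.le (hnn _)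
      linarith

lemma decomp {k : ℕ} {wb wf : ℝ} {a : ℕ → ℂ}
    (hrec : ∀ m : ℕ, a m = ColTC wb wf a m + (if m = k then 1 else 0)) (L m : ℕ) :
    a m = ((∑ i ∈ Finset.range L, uSeq k wb wf i m : ℝ) : ℂ) + (ColTC wb wf)^[L] a m := by
  induction L with
  | zero => simp
  | succ L ih =>
    have ha' : a = fun j => ColTC wb wf a j + (if j = k then (1:ℂ) else 0) := funext hrec
    have e1 : (ColTC wb wf)^[L] a m
        = (ColTC wb wf)^[L] (fun j => ColTC wb wf a j + (if j = k then (1:ℂ) else 0)) m := by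
      rw [← ha']
    have e2 : (ColTC wb wf)^[L] (fun j => ColTC wb wf a j + (if j = k then (1:ℂ) else 0)) m
        = (ColTC wb wf)^[L+1] a m + ((uSeq k wb wf L m : ℝ) : ℂ) := by
      have hδ : (ColTC wb wf)^[L] (fun j => if j = k then (1:ℂ) else 0) m
          = ((uSeq k wb wf L m : ℝ) : ℂ) := by
        have hfn : (fun j => if j = k then (1:ℂ) else 0)
            = fun j => (((if j = k then (1:ℝ) else 0) : ℝ) : ℂ) := by
          funext j; split_ifs <;> simp
        rw [hfn, ColTC_iter_coe]
        rfl
      rw [ColTC_iter_add, hδ, ← Function.iterate_succ_apply]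
    rw [Finset.sum_range_succ, Complex.ofReal_add, add_assoc,
      add_comm ((uSeq k wb wf L m : ℝ) : ℂ), ← e2, ← e1]
    exact ih

theorem stmt_10' (k : ℕ) (wb wf : ℝ) (f : ℂ → ℂ) (a : ℕ → ℂ) (hk : 0 < k)
    (hwb : 0 < wb) (hwf : 0 < wf) (hw : wb + wf < 1)
    (han : AnalyticOnNhd ℂ f {z : ℂ | ‖z‖ < 1})
    (hbdd : ∃ C : ℝ, ∀ z : ℂ, ‖z‖ < 1 → ‖f z‖ ≤ C)
    (hfe : ∀ x : ℂ, ‖x‖ < 1 →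
      2 * f (x ^ 2) = (wb : ℂ) * (f x + f (-x)) + (wf : ℂ) * x ^ 2 * (f (x ^ 6) - f (-x ^ 6))
        + 2 * x ^ (2 * k))
    (ha : ∀ x : ℂ, ‖x‖ < 1 → HasSum (fun n => a n * x ^ n) (f x))
    (n : ℕ) (hn : 0 < n) (horbit : ∃ i : ℕ, Col^[i] k = n) :
    (a n).im = 0 ∧ 0 < (a n).re := by
  obtain ⟨i₀, hi₀⟩ := horbit
  obtain ⟨C, hC⟩ := hbdd
  have haC : ∀ m, ‖a m‖ ≤ C := coeff_bound han hC ha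
  have hC0 : (0:ℝ) ≤ C := le_trans (norm_nonneg _) (hC 0 (by simp))
  have hrec : ∀ m : ℕ, a m = ColTC wb wf a m + (if m = k then 1 else 0) := by
    intro m
    simp only [ColTC]
    exact recurrence hk hfe ha m
  set S : ℕ → ℝ := fun L => ∑ i ∈ Finset.range L, uSeq k wb wf i n with hS
  have hdec : ∀ L, a n = ((S L : ℝ) : ℂ) + (ColTC wb wf)^[L] a n := fun L => decomp hrec L n
  have hbound : ∀ L, ‖a n - ((S L : ℝ) : ℂ)‖ ≤ (wb + wf) ^ L * C := by
    intro L
    have hb := ColTC_iter_bound hwb.le hwf.le L a hC0 haC n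
    have he : a n - ((S L : ℝ) : ℂ) = (ColTC wb wf)^[L] a n := by
      rw [hdec L]; ring
    rw [he]
    exact hb
  have htend0 : Filter.Tendsto (fun L => (wb + wf) ^ L * C) Filter.atTop (nhds 0) := by
    have h1 := tendsto_pow_atTop_nhds_zero_of_lt_one (by linarith : (0:ℝ) ≤ wb + wf) hw
    simpa using h1.mul_const C
  have htend : Filter.Tendsto (fun L => ((S L : ℝ) : ℂ)) Filter.atTop (nhds (a n)) := by
    rw [tendsto_iff_norm_sub_tendsto_zero]
    refine squeeze_zero (fun L => norm_nonneg _) (fun L => ?_) htend0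
    rw [norm_sub_rev]
    exact hbound L
  have hre : Filter.Tendsto S Filter.atTop (nhds ((a n).re)) := by
    have := (Complex.continuous_re.tendsto (a n)).comp htend
    simpa [Function.comp_def] using this
  have him : (a n).im = 0 := by
    have h1 := (Complex.continuous_im.tendsto (a n)).comp htend
    have h2 : Filter.Tendsto (fun L : ℕ => (((S L : ℝ) : ℂ)).im) Filter.atTop (nhds 0) := by
      simpa using (tendsto_const_nhds : Filter.Tendsto (fun _ : ℕ => (0:ℝ)) Filter.atTop (nhds 0))
    exact (tendsto_nhds_unique h1 h2)
  have hkey : (min wb wf) ^ i₀ ≤ (a n).re := by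
    refine ge_of_tendsto hre ?_
    filter_upwards [Filter.eventually_ge_atTop (i₀ + 1)] with L hL
    calc (min wb wf) ^ i₀ ≤ uSeq k wb wf i₀ n := uSeq_orbit hk hwb hwf i₀ hi₀
      _ ≤ S L := Finset.single_le_sum (fun i _ => uSeq_nonneg hwb.le hwf.le i n)
          (Finset.mem_range.mpr (by omega))
  refine ⟨him, lt_of_lt_of_le (by positivity) hkey⟩

theorem stmt_10 (k : ℕ) (wb wf : ℝ) (f : ℂ → ℂ) (a : ℕ → ℂ) (hk : 0 < k)
    (hwb : 0 < wb) (hwf : 0 < wf) (hw : wb + wf < 1)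
    (hf : IsSolution k wb wf f) (ha : HasCoeffs f a)
    (n : ℕ) (hn : 0 < n) (horbit : ∃ i : ℕ, Col^[i] k = n) :
    (a n).im = 0 ∧ 0 < (a n).re := by
  obtain ⟨han, hbdd, hfe⟩ := hf
  obtain ⟨C, hC⟩ := hbdd
  exact stmt_10' k wb wf f a hk hwb hwf hw han ⟨C, fun z hz => hC z hz⟩ hfe ha n hn horbit
end

section
/- Fix real weights with 0 < w_b, 0 < w_f and w_b + w_f < 1. Then the Collatz conjecture (for every positive integer k there exists i ≥ 0 with Col^[i](k) = 1) holds if and only if for every positive integer k and every solution f of the Collatz functional equation for (k, w_b, w_f), the coefficient a₁ of f is nonzero. -/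
noncomputable section CollatzAux

/-- Weight of one backward step. -/
def colStep (wb wf : ℝ) (n : ℕ) : ℝ := if n % 2 = 1 then wf else wb

/-- Weight of the orbit path of length `i` starting at `k`. -/
def colW (wb wf : ℝ) (k i : ℕ) : ℝ := ∏ t ∈ Finset.range i, colStep wb wf (Col^[t] k)

/-- The explicit solution of the Collatz functional equation. -/
def colF (wb wf : ℝ) (k : ℕ) (x : ℂ) : ℂ := ∑' i : ℕ, (colW wb wf k i : ℂ) * x ^ (Col^[i] k)

/-- Its Taylor coefficients. -/
def colA (wb wf : ℝ) (k n : ℕ) : ℂ :=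
  ((∑' i : ((fun j => Col^[j] k) ⁻¹' {n}), colW wb wf k i : ℝ) : ℂ)

variable {wb wf : ℝ} (hwb : 0 < wb) (hwf : 0 < wf) (hw : wb + wf < 1) {k : ℕ}

lemma colW_zero : colW wb wf k 0 = 1 := by simp [colW]

lemma colW_succ (i : ℕ) :
    colW wb wf k (i + 1) = colW wb wf k i * colStep wb wf (Col^[i] k) :=
  Finset.prod_range_succ _ _

include hwb hwf in
lemma colStep_pos (n : ℕ) : 0 < colStep wb wf n := by
  unfold colStep; split <;> assumption

lemma colStep_le (n : ℕ) : colStep wb wf n ≤ max wb wf := by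
  unfold colStep; split
  · exact le_max_right _ _
  · exact le_max_left _ _

include hwb hwf in
lemma colW_pos (i : ℕ) : 0 < colW wb wf k i :=
  Finset.prod_pos fun t _ => colStep_pos hwb hwf _

include hwb hwf hw in
lemma max_lt_one : max wb wf < 1 :=
  max_lt (by linarith) (by linarith)

include hwb hwf hw in
lemma colW_le (i : ℕ) : colW wb wf k i ≤ (max wb wf) ^ i := by
  unfold colW
  calc ∏ t ∈ Finset.range i, colStep wb wf (Col^[t] k)
      ≤ ∏ _t ∈ Finset.range i, max wb wf := by
        apply Finset.prod_le_prod
        · exact fun t _ => (colStep_pos hwb hwf _).le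
        · exact fun t _ => colStep_le _
    _ = (max wb wf) ^ i := by simp

include hwb hwf hw in
lemma summable_colW : Summable (colW wb wf k) :=
  Summable.of_nonneg_of_le (fun i => (colW_pos hwb hwf i).le) (colW_le hwb hwf hw)
    (summable_geometric_of_lt_one (le_max_of_le_left hwb.le) (max_lt_one hwb hwf hw))

include hwb hwf in
lemma norm_colTerm_le {x : ℂ} (hx : ‖x‖ ≤ 1) (i : ℕ) :
    ‖(colW wb wf k i : ℂ) * x ^ (Col^[i] k)‖ ≤ colW wb wf k i := by
  rw [norm_mul, Complex.norm_real, norm_pow]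
  calc ‖colW wb wf k i‖ * ‖x‖ ^ (Col^[i] k)
      ≤ ‖colW wb wf k i‖ * 1 := by
        apply mul_le_mul_of_nonneg_left _ (norm_nonneg _)
        exact pow_le_one₀ (norm_nonneg _) hx
    _ = colW wb wf k i := by
        rw [mul_one, Real.norm_eq_abs, abs_of_pos (colW_pos hwb hwf i)]

include hwb hwf hw in
lemma summable_term {x : ℂ} (hx : ‖x‖ ≤ 1) :
    Summable (fun i => (colW wb wf k i : ℂ) * x ^ (Col^[i] k)) :=
  Summable.of_norm_bounded (summable_colW hwb hwf hw (k := k))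
    (norm_colTerm_le hwb hwf hx)

include hwb hwf hw in
lemma hasSum_colF {x : ℂ} (hx : ‖x‖ ≤ 1) :
    HasSum (fun i => (colW wb wf k i : ℂ) * x ^ (Col^[i] k)) (colF wb wf k x) :=
  (summable_term hwb hwf hw hx).hasSum

include hwb hwf hw in
lemma colF_bound {x : ℂ} (hx : ‖x‖ ≤ 1) :
    ‖colF wb wf k x‖ ≤ ∑' i, colW wb wf k i := by
  rw [colF]
  refine (norm_tsum_le_tsum_norm ((summable_term hwb hwf hw hx).norm)).trans ?_
  exact Summable.tsum_le_tsum (norm_colTerm_le hwb hwf hx)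
    ((summable_term hwb hwf hw hx).norm) (summable_colW hwb hwf hw)

lemma colKey (x : ℂ) (i : ℕ) :
    (wb : ℂ) * ((colW wb wf k i : ℂ) * x ^ (Col^[i] k)
        + (colW wb wf k i : ℂ) * (-x) ^ (Col^[i] k))
      + (wf : ℂ) * x ^ 2 * ((colW wb wf k i : ℂ) * (x ^ 6) ^ (Col^[i] k)
        - (colW wb wf k i : ℂ) * (-x ^ 6) ^ (Col^[i] k))
      = 2 * ((colW wb wf k (i + 1) : ℂ) * (x ^ 2) ^ (Col^[i + 1] k)) := by
  set c := Col^[i] k with hc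
  have hsucc : Col^[i + 1] k = Col c := Function.iterate_succ_apply' _ _ _
  rw [hsucc, colW_succ, ← hc]
  rcases Nat.even_or_odd c with he | ho
  · have h2 : ¬ (c % 2 = 1) := by
      rcases he with ⟨m, hm⟩; omega
    have hcol : Col c = c / 2 := by rw [Col, if_neg h2]
    have hstep : colStep wb wf c = wb := by rw [colStep, if_neg h2]
    have hnegx : (-x) ^ c = x ^ c := he.neg_pow x
    have hnegx6 : (-x ^ 6) ^ c = (x ^ 6) ^ c := he.neg_pow _
    have hp : (x ^ 2) ^ (c / 2) = x ^ c := by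
      rw [← pow_mul]
      congr 1
      omega
    rw [hcol, hstep, hnegx, hnegx6, hp]
    push_cast
    ring
  · have h2 : c % 2 = 1 := Nat.odd_iff.mp ho
    have hcol : Col c = 3 * c + 1 := by rw [Col, if_pos h2]
    have hstep : colStep wb wf c = wf := by rw [colStep, if_pos h2]
    have hnegx : (-x) ^ c = -(x ^ c) := ho.neg_pow x
    have hnegx6 : (-x ^ 6) ^ c = -((x ^ 6) ^ c) := ho.neg_pow _
    have hp : (x ^ 2) ^ (3 * c + 1) = (x ^ 6) ^ c * x ^ 2 := by
      rw [← pow_mul, ← pow_mul, ← pow_add]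
      congr 1
      ring
    rw [hcol, hstep, hnegx, hnegx6, hp]
    push_cast
    ring

include hwb hwf hw in
lemma colF_funEq {x : ℂ} (hx : ‖x‖ < 1) :
    2 * colF wb wf k (x ^ 2) =
      (wb : ℂ) * (colF wb wf k x + colF wb wf k (-x)) +
        (wf : ℂ) * x ^ 2 * (colF wb wf k (x ^ 6) - colF wb wf k (-x ^ 6)) +
        2 * x ^ (2 * k) := by
  have hx1 : ‖x‖ ≤ 1 := hx.le
  have hx2 : ‖x ^ 2‖ ≤ 1 := by
    rw [norm_pow]; exact pow_le_one₀ (norm_nonneg _) hx1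
  have hx6 : ‖x ^ 6‖ ≤ 1 := by
    rw [norm_pow]; exact pow_le_one₀ (norm_nonneg _) hx1
  have hnx : ‖-x‖ ≤ 1 := by rwa [norm_neg]
  have hnx6 : ‖-x ^ 6‖ ≤ 1 := by rwa [norm_neg]
  have h1 := hasSum_colF hwb hwf hw (k := k) hx2
  have h2 := hasSum_colF hwb hwf hw (k := k) hx1
  have h3 := hasSum_colF hwb hwf hw (k := k) hnx
  have h4 := hasSum_colF hwb hwf hw (k := k) hx6
  have h5 := hasSum_colF hwb hwf hw (k := k) hnx6
  have hR := ((h2.add h3).mul_left (wb : ℂ)).add ((h4.sub h5).mul_left ((wf : ℂ) * x ^ 2))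
  rw [show (fun i => (wb : ℂ) * ((colW wb wf k i : ℂ) * x ^ (Col^[i] k)
        + (colW wb wf k i : ℂ) * (-x) ^ (Col^[i] k))
      + (wf : ℂ) * x ^ 2 * ((colW wb wf k i : ℂ) * (x ^ 6) ^ (Col^[i] k)
        - (colW wb wf k i : ℂ) * (-x ^ 6) ^ (Col^[i] k)))
      = fun i => 2 * ((colW wb wf k (i + 1) : ℂ) * (x ^ 2) ^ (Col^[i + 1] k))
      from funext fun i => colKey x i] at hR
  have hL := h1.mul_left (2 : ℂ)
  have hL' : HasSum (fun i => 2 * ((colW wb wf k (i + 1) : ℂ) * (x ^ 2) ^ (Col^[i + 1] k)))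
      (2 * colF wb wf k (x ^ 2)
        - 2 * ((colW wb wf k 0 : ℂ) * (x ^ 2) ^ (Col^[0] k))) := by
    apply (hasSum_nat_add_iff
      (f := fun i => 2 * ((colW wb wf k i : ℂ) * (x ^ 2) ^ (Col^[i] k))) 1).mpr
    simpa using hL
  have huniq := hR.unique hL'
  have h0 : ((colW wb wf k 0 : ℂ) * (x ^ 2) ^ (Col^[0] k)) = x ^ (2 * k) := by
    rw [colW_zero]
    simp [← pow_mul]
  rw [h0] at huniq
  linear_combination -huniq

include hwb hwf hw in
lemma hasCoeffs_colF : HasCoeffs (colF wb wf k) (colA wb wf k) := by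
  intro x hx
  have h := (hasSum_colF hwb hwf hw (k := k) hx.le).tsum_fiberwise (fun i => Col^[i] k)
  convert h using 2 with n
  · rfl
  have hWsub : Summable (fun i : ((fun j => Col^[j] k) ⁻¹' {n}) => colW wb wf k i) :=
    (summable_colW hwb hwf hw (k := k)).subtype _
  calc colA wb wf k n * x ^ n
      = (∑' i : ((fun j => Col^[j] k) ⁻¹' {n}), ((colW wb wf k i : ℂ))) * x ^ n := by
        rw [colA, Complex.ofReal_tsum]
    _ = ∑' i : ((fun j => Col^[j] k) ⁻¹' {n}), ((colW wb wf k i : ℂ)) * x ^ n :=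
        (tsum_mul_right).symm
    _ = ∑' i : ((fun j => Col^[j] k) ⁻¹' {n}), ((colW wb wf k (i : ℕ) : ℂ))
          * x ^ (Col^[(i : ℕ)] k) := by
        apply tsum_congr
        rintro ⟨i, hi⟩
        have : Col^[i] k = n := hi
        rw [this]

include hwb hwf hw in
lemma colA_one_ne_zero (h : ∃ i : ℕ, Col^[i] k = 1) : colA wb wf k 1 ≠ 0 := by
  obtain ⟨i, hi⟩ := h
  rw [colA, Ne, Complex.ofReal_eq_zero]
  have hpos : 0 < ∑' j : ((fun j => Col^[j] k) ⁻¹' {1}), colW wb wf k j := by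
    refine Summable.tsum_pos ((summable_colW hwb hwf hw (k := k)).subtype _)
      (fun j => (colW_pos hwb hwf _).le) ⟨i, hi⟩ (colW_pos hwb hwf _)
  exact ne_of_gt hpos

lemma colA_one_eq_zero (h : ∀ i : ℕ, Col^[i] k ≠ 1) : colA wb wf k 1 = 0 := by
  have : IsEmpty ((fun j => Col^[j] k) ⁻¹' {1} : Set ℕ) :=
    ⟨fun j => h j j.2⟩
  rw [colA, tsum_empty]
  exact Complex.ofReal_zero

end CollatzAux

noncomputable section PS

lemma hasFPowerSeries_of_hasCoeffs {f : ℂ → ℂ} {a : ℕ → ℂ} (h : HasCoeffs f a)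
    {r : NNReal} (hr0 : 0 < r) (hr1 : (r : ℝ) < 1) :
    HasFPowerSeriesOnBall f (FormalMultilinearSeries.ofScalars ℂ a) 0 r := by
  refine ⟨?_, by exact_mod_cast hr0, ?_⟩
  · have habs : ‖((r : ℝ) : ℂ)‖ < 1 := by
      simpa [Complex.norm_real, Real.norm_eq_abs, abs_of_nonneg r.coe_nonneg] using hr1
    have hsum : Summable (fun n => a n * ((r : ℝ) : ℂ) ^ n) := (h _ habs).summable
    have ht : Filter.Tendsto
        (fun n => ‖FormalMultilinearSeries.ofScalars ℂ a n‖ * (r : ℝ) ^ n)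
        Filter.atTop (nhds 0) := by
      have := (hsum.tendsto_atTop_zero).norm
      simp only [norm_zero] at this
      convert this using 2 with n
      rw [FormalMultilinearSeries.ofScalars_norm, norm_mul, norm_pow, Complex.norm_real,
        Real.norm_eq_abs, abs_of_nonneg r.coe_nonneg]
    exact FormalMultilinearSeries.le_radius_of_tendsto _ ht
  · intro y hy
    rw [mem_emetric_ball_zero_iff] at hy
    have hy1 : ‖y‖ < 1 := by
      calc ‖y‖ < (r : ℝ) := by exact_mod_cast hy
        _ < 1 := hr1
    have := h y hy1
    simp only [FormalMultilinearSeries.ofScalars_apply_eq, smul_eq_mul, zero_add]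
    exact this

lemma coeffs_unique_s12 {f : ℂ → ℂ} {a b : ℕ → ℂ} (ha : HasCoeffs f a) (hb : HasCoeffs f b) :
    a = b := by
  have h1 := (hasFPowerSeries_of_hasCoeffs ha (r := 1/2) (by norm_num) (by norm_num)
    ).hasFPowerSeriesAt
  have h2 := (hasFPowerSeries_of_hasCoeffs hb (r := 1/2) (by norm_num) (by norm_num)
    ).hasFPowerSeriesAt
  exact FormalMultilinearSeries.ofScalars_series_injective ℂ ℂ
    (h1.eq_formalMultilinearSeries h2)

lemma analyticOnNhd_of_hasCoeffs {f : ℂ → ℂ} {a : ℕ → ℂ} (h : HasCoeffs f a) :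
    AnalyticOnNhd ℂ f openUnitDisc := by
  intro z hz
  have hz' : ‖z‖ < 1 := hz
  set s : ℝ := (‖z‖ + 1) / 2 with hs
  have hs0 : 0 < s := by positivity
  have hzs : ‖z‖ < s := by simp only [hs]; linarith
  have hs1 : s < 1 := by simp only [hs]; linarith
  refine (hasFPowerSeries_of_hasCoeffs h (r := ⟨s, hs0.le⟩) ?_ ?_).analyticAt_of_mem ?_
  · exact_mod_cast hs0
  · exact_mod_cast hs1
  · rw [mem_emetric_ball_zero_iff]
    rw [enorm_eq_nnnorm]
    exact ENNReal.coe_lt_coe.mpr (NNReal.coe_lt_coe.mp hzs)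

end PS

section Main

variable {wb wf : ℝ} (hwb : 0 < wb) (hwf : 0 < wf) (hw : wb + wf < 1) {k : ℕ}

include hwb hwf hw in
lemma isSolution_colF : IsSolution k wb wf (colF wb wf k) := by
  refine ⟨analyticOnNhd_of_hasCoeffs (hasCoeffs_colF hwb hwf hw), ⟨∑' i, colW wb wf k i, ?_⟩, ?_⟩
  · intro z hz
    have hz1 : ‖z‖ ≤ 1 := by
      exact le_of_lt hz
    exact colF_bound hwb hwf hw hz1
  · intro x hx
    exact colF_funEq hwb hwf hw hx

include hwb hwf hw in
lemma solution_unique {f g : ℂ → ℂ} (hf : IsSolution k wb wf f) (hg : IsSolution k wb wf g) :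
    ∀ z ∈ openUnitDisc, f z = g z := by
  obtain ⟨-, ⟨Cf, hCf⟩, hfe⟩ := hf
  obtain ⟨-, ⟨Cg, hCg⟩, hge⟩ := hg
  set d : ℂ → ℝ := fun z => ‖f z - g z‖ with hd
  set S := sSup (d '' openUnitDisc) with hS
  have hbdd : BddAbove (d '' openUnitDisc) := by
    refine ⟨Cf + Cg, ?_⟩
    rintro - ⟨z, hz, rfl⟩
    have h1 := hCf z hz
    have h2 := hCg z hz
    calc d z ≤ ‖f z‖ + ‖g z‖ := norm_sub_le _ _
      _ ≤ Cf + Cg := add_le_add h1 h2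
  have h0mem : (0 : ℂ) ∈ openUnitDisc := by simp [openUnitDisc]
  have hne : (d '' openUnitDisc).Nonempty := ⟨d 0, ⟨0, h0mem, rfl⟩⟩
  have hle : ∀ z ∈ openUnitDisc, d z ≤ S := fun z hz => le_csSup hbdd ⟨z, hz, rfl⟩
  have hS0 : 0 ≤ S := le_trans (norm_nonneg _) (hle 0 h0mem)
  have key : ∀ y ∈ openUnitDisc, d y ≤ (wb + wf) * S := by
    intro y hy
    obtain ⟨x, hx2⟩ := IsAlgClosed.exists_pow_nat_eq y (n := 2) (by norm_num)
    have hyabs : ‖y‖ < 1 := hy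
    have hxlt : ‖x‖ < 1 := by
      by_contra hcon
      push_neg at hcon
      have : (1 : ℝ) ≤ ‖y‖ := by
        rw [← hx2, norm_pow]
        exact one_le_pow₀ hcon
      linarith
    have hxd : x ∈ openUnitDisc := hxlt
    have hnxd : -x ∈ openUnitDisc := by
      show ‖-x‖ < 1
      rwa [norm_neg]
    have hx6d : x ^ 6 ∈ openUnitDisc := by
      show ‖x ^ 6‖ < 1
      rw [norm_pow]
      exact pow_lt_one₀ (norm_nonneg _) hxlt (by norm_num)
    have hnx6d : -x ^ 6 ∈ openUnitDisc := by
      show ‖-x ^ 6‖ < 1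
      rw [norm_neg]
      exact hx6d
    have e1 := hfe x hxlt
    have e2 := hge x hxlt
    have hdiff : 2 * (f (x ^ 2) - g (x ^ 2)) =
        (wb : ℂ) * ((f x - g x) + (f (-x) - g (-x))) +
          (wf : ℂ) * x ^ 2 * ((f (x ^ 6) - g (x ^ 6)) - (f (-x ^ 6) - g (-x ^ 6))) := by
      linear_combination e1 - e2
    have hxsq : ‖x‖ ^ 2 ≤ 1 := by
      exact pow_le_one₀ (norm_nonneg _) hxlt.le
    have habs : 2 * d (x ^ 2) ≤ wb * (d x + d (-x)) + wf * (d (x ^ 6) + d (-x ^ 6)) := by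
      have h1 : 2 * d (x ^ 2) = ‖2 * (f (x ^ 2) - g (x ^ 2))‖ := by
        rw [norm_mul]
        simp [hd]
      rw [h1, hdiff]
      calc ‖(wb : ℂ) * ((f x - g x) + (f (-x) - g (-x))) +
          (wf : ℂ) * x ^ 2 * ((f (x ^ 6) - g (x ^ 6)) - (f (-x ^ 6) - g (-x ^ 6)))‖
          ≤ ‖(wb : ℂ) * ((f x - g x) + (f (-x) - g (-x)))‖ +
            ‖(wf : ℂ) * x ^ 2 * ((f (x ^ 6) - g (x ^ 6)) - (f (-x ^ 6) - g (-x ^ 6)))‖ :=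
            norm_add_le _ _
        _ ≤ wb * (d x + d (-x)) + wf * (d (x ^ 6) + d (-x ^ 6)) := by
            apply add_le_add
            · rw [norm_mul, Complex.norm_real, Real.norm_eq_abs, abs_of_pos hwb]
              exact mul_le_mul_of_nonneg_left (norm_add_le _ _) hwb.le
            · rw [norm_mul, norm_mul, Complex.norm_real, Real.norm_eq_abs, abs_of_pos hwf,
                norm_pow]
              calc wf * ‖x‖ ^ 2 * ‖(f (x ^ 6) - g (x ^ 6)) - (f (-x ^ 6) - g (-x ^ 6))‖
                  ≤ wf * 1 * (d (x ^ 6) + d (-x ^ 6)) := by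
                    apply mul_le_mul
                    · exact mul_le_mul_of_nonneg_left hxsq hwf.le
                    · exact norm_sub_le _ _
                    · exact norm_nonneg _
                    · positivity
                _ = wf * (d (x ^ 6) + d (-x ^ 6)) := by ring
    have hfin : 2 * d (x ^ 2) ≤ 2 * ((wb + wf) * S) := by
      calc 2 * d (x ^ 2) ≤ wb * (d x + d (-x)) + wf * (d (x ^ 6) + d (-x ^ 6)) := habs
        _ ≤ wb * (S + S) + wf * (S + S) := by
            apply add_le_add
            · exact mul_le_mul_of_nonneg_left (add_le_add (hle x hxd) (hle _ hnxd)) hwb.le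
            · exact mul_le_mul_of_nonneg_left (add_le_add (hle _ hx6d) (hle _ hnx6d)) hwf.le
        _ = 2 * ((wb + wf) * S) := by ring
    have : d (x ^ 2) ≤ (wb + wf) * S := by linarith
    rwa [hx2] at this
  have hSle : S ≤ (wb + wf) * S := by
    apply csSup_le hne
    rintro - ⟨y, hy, rfl⟩
    exact key y hy
  have hSzero : S ≤ 0 := by nlinarith
  intro z hz
  have h1 : d z ≤ 0 := le_trans (hle z hz) hSzero
  have h2 : d z = 0 := le_antisymm h1 (norm_nonneg _)
  rw [hd] at h2
  simpa [sub_eq_zero] using (norm_eq_zero.mp h2)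

end Main

theorem stmt_12 (wb wf : ℝ) (hwb : 0 < wb) (hwf : 0 < wf) (hw : wb + wf < 1) :
    (∀ k : ℕ, 0 < k → ∃ i : ℕ, Col^[i] k = 1) ↔
      (∀ k : ℕ, 0 < k → ∀ f : ℂ → ℂ, ∀ a : ℕ → ℂ,
        IsSolution k wb wf f → HasCoeffs f a → a 1 ≠ 0) := by
  constructor
  · intro hcol k hk f a hsol hca
    have hFsol := isSolution_colF hwb hwf hw (k := k)
    have heq := solution_unique hwb hwf hw hsol hFsol
    have hcaF : HasCoeffs (colF wb wf k) a := by
      intro x hx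
      have := hca x hx
      rwa [heq x hx] at this
    have ha : a = colA wb wf k := coeffs_unique_s12 hcaF (hasCoeffs_colF hwb hwf hw)
    rw [ha]
    exact colA_one_ne_zero hwb hwf hw (hcol k hk)
  · intro h k hk
    by_contra hno
    push_neg at hno
    exact (h k hk (colF wb wf k) (colA wb wf k) (isSolution_colF hwb hwf hw)
      (hasCoeffs_colF hwb hwf hw)) (colA_one_eq_zero hno)
end

section
/- Assume 0 < w_b, 0 < w_f and w_b + w_f < 1, and let f be a solution of the Collatz functional equation for (k, w_b, w_f) with coefficients (aₙ). If the Collatz orbit of k reaches the number 2^h·o for some h ≥ 0 and odd positive integer o (i.e. Col^[i](k) = 2^h·o for some i ≥ 0), then a_{2^j·o} > 0 for every j with 0 ≤ j ≤ h. -/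
open Complex Metric



noncomputable def seriesOf (c : ℕ → ℂ) : FormalMultilinearSeries ℂ ℂ ℂ :=
  fun n => ContinuousMultilinearMap.mkPiRing ℂ (Fin n) (c n)

lemma seriesOf_apply (c : ℕ → ℂ) (n : ℕ) (y : ℂ) :
    (seriesOf c n fun _ => y) = c n * y ^ n := by
  simp [seriesOf, ContinuousMultilinearMap.mkPiRing_apply, mul_comm, smul_eq_mul]

lemma norm_seriesOf (c : ℕ → ℂ) (n : ℕ) : ‖seriesOf c n‖ = ‖c n‖ :=
  ContinuousMultilinearMap.norm_mkPiRing _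

lemma le_radius_seriesOf (c : ℕ → ℂ) {g : ℂ → ℂ}
    (h : ∀ x : ℂ, ‖x‖ < 1 → HasSum (fun m => c m * x ^ m) (g x))
    (r : NNReal) (hr : (r : ℝ) < 1) : (r : ENNReal) ≤ (seriesOf c).radius := by
  apply FormalMultilinearSeries.le_radius_of_summable
  have hx : ‖((r : ℝ) : ℂ)‖ < 1 := by
    rwa [Complex.norm_real, Real.norm_eq_abs, _root_.abs_of_nonneg r.coe_nonneg]
  have hs : Summable (fun m => c m * ((r : ℝ) : ℂ) ^ m) := (h _ hx).summable
  have := (summable_norm_iff.mpr hs)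
  refine this.congr fun m => ?_
  rw [norm_seriesOf, norm_mul, norm_pow]
  simp [_root_.abs_of_nonneg r.coe_nonneg]

lemma hasFPowerSeriesOnBall_of (c : ℕ → ℂ) (g : ℂ → ℂ)
    (h : ∀ x : ℂ, ‖x‖ < 1 → HasSum (fun m => c m * x ^ m) (g x)) :
    HasFPowerSeriesOnBall g (seriesOf c) 0 1 where
  r_le := by
    refine ENNReal.le_of_forall_nnreal_lt fun r hr => le_radius_seriesOf c h r ?_
    exact_mod_cast hr
  r_pos := one_pos
  hasSum := by
    intro y hy
    rw [mem_emetric_ball_zero_iff] at hy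
    have hy' : ‖y‖ < 1 := by
      rw [← _root_.ofReal_norm, ENNReal.ofReal_lt_one] at hy; exact hy
    simp only [zero_add]
    have he : (fun n => seriesOf c n fun _ => y) = fun n => c n * y ^ n :=
      funext fun n => seriesOf_apply c n y
    rw [he]
    exact h y hy'


lemma coeff_eq_zero (c : ℕ → ℂ)
    (h : ∀ x : ℂ, ‖x‖ < 1 → HasSum (fun m => c m * x ^ m) 0) :
    ∀ m, c m = 0 := by
  intro m
  have hp : HasFPowerSeriesOnBall (0 : ℂ → ℂ) (seriesOf c) 0 1 :=
    hasFPowerSeriesOnBall_of c 0 h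
  have h0 : seriesOf c = 0 := hp.hasFPowerSeriesAt.eq_zero
  have h1 := seriesOf_apply c m 1
  rw [h0] at h1
  simpa using h1.symm

lemma coeff_bound_s13 {f : ℂ → ℂ} {a : ℕ → ℂ}
    (hd : DifferentiableOn ℂ f (ball (0:ℂ) 1)) (C : ℝ)
    (hC : ∀ z : ℂ, ‖z‖ < 1 → ‖f z‖ ≤ C)
    (hP : HasFPowerSeriesOnBall f (seriesOf a) 0 1) :
    ∀ n, ‖a n‖ ≤ C := by
  intro n
  have key : ∀ R : NNReal, 0 < R → (R : ℝ) < 1 → ‖a n‖ * (R : ℝ) ^ n ≤ C := by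
    intro R hR0 hR1
    have hsub : closedBall (0:ℂ) R ⊆ ball (0:ℂ) 1 := closedBall_subset_ball (by exact_mod_cast hR1)
    have h1 : HasFPowerSeriesOnBall f (cauchyPowerSeries f 0 R) 0 R :=
      (hd.mono hsub).hasFPowerSeriesOnBall hR0
    have heq : cauchyPowerSeries f 0 (R : ℝ) = seriesOf a :=
      h1.hasFPowerSeriesAt.eq_formalMultilinearSeries hP.hasFPowerSeriesAt
    have hcont : Continuous fun θ : ℝ => ‖f (circleMap 0 (R : ℝ) θ)‖ := by
      refine ((hd.continuousOn.comp_continuous (continuous_circleMap 0 (R:ℝ)) ?_)).norm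
      intro θ
      rw [mem_ball, dist_zero_right, norm_circleMap_zero, _root_.abs_of_nonneg R.coe_nonneg]
      exact hR1
    have hint : (∫ θ : ℝ in (0)..2 * Real.pi, ‖f (circleMap 0 (R : ℝ) θ)‖) ≤ 2 * Real.pi * C := by
      have := intervalIntegral.integral_mono_on (μ := MeasureTheory.volume) (g := fun _ : ℝ => C) Real.two_pi_pos.le
        (hcont.intervalIntegrable 0 (2*Real.pi)) intervalIntegrable_const ?_
      · simpa using this
      · intro θ _
        refine hC _ ?_
        rw [norm_circleMap_zero, _root_.abs_of_nonneg R.coe_nonneg]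
        exact hR1
    have hb := norm_cauchyPowerSeries_le f 0 (R : ℝ) n
    rw [heq, norm_seriesOf] at hb
    have hC0 : 0 ≤ C := le_trans (norm_nonneg _) (hC 0 (by simp))
    have h2 : ‖a n‖ ≤ C * ((R:ℝ)⁻¹) ^ n := by
      refine hb.trans ?_
      rw [_root_.abs_of_nonneg R.coe_nonneg]
      have hmain : (2 * Real.pi)⁻¹ * (∫ θ : ℝ in (0)..2 * Real.pi, ‖f (circleMap 0 (R : ℝ) θ)‖)
          ≤ C := by
        rw [inv_mul_le_iff₀ Real.two_pi_pos]
        calc (∫ θ : ℝ in (0)..2 * Real.pi, ‖f (circleMap 0 (R : ℝ) θ)‖)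
            ≤ 2 * Real.pi * C := hint
          _ = (2 * Real.pi) * C := by ring
      exact mul_le_mul_of_nonneg_right hmain (by positivity)
    calc ‖a n‖ * (R:ℝ)^n ≤ C * ((R:ℝ)⁻¹)^n * (R:ℝ)^n := by gcongr <;> positivity
      _ = C := by
          rw [mul_assoc, ← mul_pow, inv_mul_cancel₀ (by positivity), one_pow, mul_one]
  have htend : Filter.Tendsto (fun R : ℝ => ‖a n‖ * R ^ n) (nhdsWithin 1 (Set.Iio 1))
      (nhds (‖a n‖ * 1 ^ n)) :=
    ((continuous_const.mul (continuous_pow n)).tendsto 1).mono_left nhdsWithin_le_nhds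
  have hev : ∀ᶠ R : ℝ in nhdsWithin 1 (Set.Iio 1), ‖a n‖ * R ^ n ≤ C := by
    filter_upwards [Ioo_mem_nhdsLT_of_mem (by norm_num : (1:ℝ) ∈ Set.Ioc 0 1)] with R hR
    exact key ⟨R, hR.1.le⟩ (by exact_mod_cast hR.1) hR.2
  have := le_of_tendsto htend hev
  simpa using this

lemma recursion (k : ℕ) (wb wf : ℝ) (f : ℂ → ℂ) (a : ℕ → ℂ)
    (hfe : ∀ x : ℂ, ‖x‖ < 1 →
      2 * f (x ^ 2) = (wb : ℂ) * (f x + f (-x)) +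
        (wf : ℂ) * x ^ 2 * (f (x ^ 6) - f (-x ^ 6)) + 2 * x ^ (2 * k))
    (ha : ∀ x : ℂ, ‖x‖ < 1 → HasSum (fun n => a n * x ^ n) (f x)) :
    ∀ n : ℕ, a n = (wb : ℂ) * a (2 * n) +
      (if n % 3 = 1 ∧ ((n - 1) / 3) % 2 = 1 then (wf : ℂ) * a ((n - 1) / 3) else 0) +
      (if n = k then 1 else 0) := by
  set D : ℕ → ℂ := fun m =>
    (if m % 2 = 0 then 2 * a (m / 2) else 0)
      - (wb : ℂ) * (1 + (-1 : ℂ) ^ m) * a m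
      - (if m % 6 = 2 then (wf : ℂ) * (1 - (-1 : ℂ) ^ ((m - 2) / 6)) * a ((m - 2) / 6) else 0)
      - (if m = 2 * k then (2 : ℂ) else 0) with hD
  have hzero : ∀ m, D m = 0 := by
    apply coeff_eq_zero
    intro x hx
    have hx2 : ‖x ^ 2‖ < 1 := by
      rw [norm_pow]; exact pow_lt_one₀ (norm_nonneg x) hx (by norm_num)
    have hx6 : ‖x ^ 6‖ < 1 := by
      rw [norm_pow]; exact pow_lt_one₀ (norm_nonneg x) hx (by norm_num)
    have hxn : ‖-x‖ < 1 := by rwa [norm_neg]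
    have hx6n : ‖-x ^ 6‖ < 1 := by rwa [norm_neg]
    -- S1 : the left-hand side
    have S1 : HasSum (fun m => (if m % 2 = 0 then 2 * a (m / 2) else 0) * x ^ m)
        (2 * f (x ^ 2)) := by
      have base := (ha (x ^ 2) hx2).mul_left 2
      have hinj : Function.Injective (fun n : ℕ => 2 * n) := fun p q hpq => by
        dsimp at hpq; omega
      rw [← Function.Injective.hasSum_iff hinj ?_]
      · have he : ((fun m => (if m % 2 = 0 then 2 * a (m / 2) else 0) * x ^ m) ∘ fun n : ℕ => 2 * n)
            = fun n => 2 * (a n * (x ^ 2) ^ n) := by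
          funext n
          simp only [Function.comp]
          rw [if_pos (by omega : (2 * n) % 2 = 0), (by omega : 2 * n / 2 = n), pow_mul]
          ring
        rw [he]; exact base
      · intro m hm
        have hm2 : m % 2 ≠ 0 := by
          intro hc
          exact hm ⟨m / 2, by dsimp; omega⟩
        simp [hm2]
    -- S2 : the even-part term
    have S2 : HasSum (fun m => (wb : ℂ) * (1 + (-1 : ℂ) ^ m) * a m * x ^ m)
        ((wb : ℂ) * (f x + f (-x))) := by
      have base := ((ha x hx).add (ha (-x) hxn)).mul_left (wb : ℂ)
      have he : (fun n => (wb : ℂ) * (a n * x ^ n + a n * (-x) ^ n))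
          = fun n => (wb : ℂ) * (1 + (-1 : ℂ) ^ n) * a n * x ^ n := by
        funext n
        rw [neg_pow]
        ring
      rw [he] at base
      exact base
    -- S3 : the odd-part term
    have S3 : HasSum (fun m => (if m % 6 = 2 then
          (wf : ℂ) * (1 - (-1 : ℂ) ^ ((m - 2) / 6)) * a ((m - 2) / 6) else 0) * x ^ m)
        ((wf : ℂ) * x ^ 2 * (f (x ^ 6) - f (-x ^ 6))) := by
      have base := ((ha (x ^ 6) hx6).sub (ha (-x ^ 6) hx6n)).mul_left ((wf : ℂ) * x ^ 2)
      have hinj : Function.Injective (fun n : ℕ => 6 * n + 2) := fun p q hpq => by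
        dsimp at hpq; omega
      rw [← Function.Injective.hasSum_iff hinj ?_]
      · have he : ((fun m => (if m % 6 = 2 then
              (wf : ℂ) * (1 - (-1 : ℂ) ^ ((m - 2) / 6)) * a ((m - 2) / 6) else 0) * x ^ m)
              ∘ fun n : ℕ => 6 * n + 2)
            = fun n => (wf : ℂ) * x ^ 2 * (a n * (x ^ 6) ^ n - a n * (-x ^ 6) ^ n) := by
          funext n
          simp only [Function.comp]
          rw [if_pos (by omega : (6 * n + 2) % 6 = 2), (by omega : (6 * n + 2 - 2) / 6 = n)]
          rw [neg_pow, pow_add, pow_mul]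
          ring
        rw [he]; exact base
      · intro m hm
        have hm2 : m % 6 ≠ 2 := by
          intro hc
          exact hm ⟨(m - 2) / 6, by dsimp; omega⟩
        simp [hm2]
    -- S4 : the monomial
    have S4 : HasSum (fun m => (if m = 2 * k then (2 : ℂ) else 0) * x ^ m)
        (2 * x ^ (2 * k)) := by
      have base := hasSum_ite_eq (2 * k) ((2 : ℂ) * x ^ (2 * k))
      have he : (fun m => (if m = 2 * k then (2 : ℂ) else 0) * x ^ m)
          = fun m => if m = 2 * k then (2 : ℂ) * x ^ (2 * k) else 0 := by
        funext m
        by_cases hm : m = 2 * k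
        · subst hm; simp
        · simp [hm]
      rw [he]; exact base
    have total := S1.sub ((S2.add S3).add S4)
    have hzero : 2 * f (x ^ 2) - ((wb : ℂ) * (f x + f (-x)) +
        (wf : ℂ) * x ^ 2 * (f (x ^ 6) - f (-x ^ 6)) + 2 * x ^ (2 * k)) = 0 := by
      rw [hfe x hx]; ring
    rw [hzero] at total
    have he : (fun m => (if m % 2 = 0 then 2 * a (m / 2) else 0) * x ^ m -
          ((wb : ℂ) * (1 + (-1 : ℂ) ^ m) * a m * x ^ m +
            (if m % 6 = 2 then
              (wf : ℂ) * (1 - (-1 : ℂ) ^ ((m - 2) / 6)) * a ((m - 2) / 6) else 0) * x ^ m +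
            (if m = 2 * k then (2 : ℂ) else 0) * x ^ m))
        = fun m => D m * x ^ m := by
      funext m
      rw [hD]
      ring
    rw [he] at total
    exact total
  -- Step B : evaluate at 2 * n
  intro n
  have hn := hzero (2 * n)
  rw [hD] at hn
  simp only [] at hn
  rw [if_pos (by omega : (2 * n) % 2 = 0), (by omega : 2 * n / 2 = n)] at hn
  have hpow : (-1 : ℂ) ^ (2 * n) = 1 := by
    rw [pow_mul]; norm_num
  rw [hpow] at hn
  simp only [show (2 * n = 2 * k) ↔ (n = k) by constructor <;> omega] at hn
  by_cases h3 : (2 * n) % 6 = 2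
  · have h3' : n % 3 = 1 := by omega
    rw [if_pos h3, (by omega : (2 * n - 2) / 6 = (n - 1) / 3)] at hn
    by_cases hodd : ((n - 1) / 3) % 2 = 1
    · rw [Odd.neg_one_pow (α := ℂ) ⟨(n - 1) / 3 / 2, by omega⟩] at hn
      rw [if_pos (⟨h3', hodd⟩ : n % 3 = 1 ∧ ((n - 1) / 3) % 2 = 1)]
      by_cases hk : n = k
      · rw [if_pos hk] at hn; rw [if_pos hk]; linear_combination hn / 2
      · rw [if_neg hk] at hn; rw [if_neg hk]; linear_combination hn / 2
    · rw [Even.neg_one_pow (α := ℂ) ((Nat.even_iff).mpr (by omega))] at hn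
      rw [if_neg (by tauto : ¬(n % 3 = 1 ∧ ((n - 1) / 3) % 2 = 1))]
      by_cases hk : n = k
      · rw [if_pos hk] at hn; rw [if_pos hk]; linear_combination hn / 2
      · rw [if_neg hk] at hn; rw [if_neg hk]; linear_combination hn / 2
  · rw [if_neg h3] at hn
    rw [if_neg (fun hc => h3 (by omega) : ¬(n % 3 = 1 ∧ ((n - 1) / 3) % 2 = 1))]
    by_cases hk : n = k
    · rw [if_pos hk] at hn; rw [if_pos hk]; linear_combination hn / 2
    · rw [if_neg hk] at hn; rw [if_neg hk]; linear_combination hn / 2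

/-- Finite-depth lower-approximation of the coefficients. -/
def qseq (k : ℕ) (wb wf : ℝ) : ℕ → ℕ → ℝ
  | 0, _ => 0
  | N + 1, n =>
      wb * qseq k wb wf N (2 * n) +
        (if n % 3 = 1 ∧ ((n - 1) / 3) % 2 = 1 then wf * qseq k wb wf N ((n - 1) / 3) else 0) +
        (if n = k then 1 else 0)

lemma qseq_zero (k : ℕ) (wb wf : ℝ) (n : ℕ) : qseq k wb wf 0 n = 0 := rfl

lemma qseq_succ (k : ℕ) (wb wf : ℝ) (N n : ℕ) :
    qseq k wb wf (N + 1) n =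
      wb * qseq k wb wf N (2 * n) +
        (if n % 3 = 1 ∧ ((n - 1) / 3) % 2 = 1 then wf * qseq k wb wf N ((n - 1) / 3) else 0) +
        (if n = k then 1 else 0) := rfl

lemma qseq_nonneg {k : ℕ} {wb wf : ℝ} (hwb : 0 ≤ wb) (hwf : 0 ≤ wf) :
    ∀ N n, 0 ≤ qseq k wb wf N n := by
  intro N
  induction N with
  | zero => intro n; simp [qseq]
  | succ N ih =>
    intro n
    have h1 : 0 ≤ wb * qseq k wb wf N (2 * n) := mul_nonneg hwb (ih _)
    have h2 : 0 ≤ (if n % 3 = 1 ∧ ((n - 1) / 3) % 2 = 1 then wf * qseq k wb wf N ((n - 1) / 3)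
        else 0) := by
      split
      · exact mul_nonneg hwf (ih _)
      · exact le_refl 0
    have h3 : (0:ℝ) ≤ (if n = k then 1 else 0) := by positivity
    rw [qseq_succ]
    linarith

lemma qseq_mono {k : ℕ} {wb wf : ℝ} (hwb : 0 ≤ wb) (hwf : 0 ≤ wf) :
    ∀ N n, qseq k wb wf N n ≤ qseq k wb wf (N + 1) n := by
  intro N
  induction N with
  | zero => intro n; simpa [qseq_zero] using qseq_nonneg hwb hwf 1 n
  | succ N ih =>
    intro n
    rw [qseq_succ, qseq_succ]
    have h1 : wb * qseq k wb wf N (2 * n) ≤ wb * qseq k wb wf (N + 1) (2 * n) :=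
      mul_le_mul_of_nonneg_left (ih _) hwb
    have h2 : (if n % 3 = 1 ∧ ((n - 1) / 3) % 2 = 1 then wf * qseq k wb wf N ((n - 1) / 3)
          else 0) ≤
        (if n % 3 = 1 ∧ ((n - 1) / 3) % 2 = 1 then wf * qseq k wb wf (N + 1) ((n - 1) / 3)
          else 0) := by
      split
      · exact mul_le_mul_of_nonneg_left (ih _) hwf
      · exact le_refl 0
    linarith

lemma qseq_le_of_le {k : ℕ} {wb wf : ℝ} (hwb : 0 ≤ wb) (hwf : 0 ≤ wf)
    {M N : ℕ} (h : M ≤ N) (n : ℕ) : qseq k wb wf M n ≤ qseq k wb wf N n := by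
  induction N with
  | zero => simp_all
  | succ N ih =>
    rcases Nat.lt_or_ge M (N + 1) with hlt | hge
    · exact (ih (by omega)).trans (qseq_mono hwb hwf N n)
    · have : M = N + 1 := by omega
      subst this; rfl

lemma qseq_pos {k : ℕ} {wb wf : ℝ} (hwb : 0 < wb) (hwf : 0 < wf) (hk : 0 < k) :
    ∀ i, 0 < qseq k wb wf (i + 1) (Col^[i] k) := by
  intro i
  induction i with
  | zero =>
    simp only [Function.iterate_zero, id_eq]
    rw [qseq_succ]
    have h1 : 0 ≤ wb * qseq k wb wf 0 (2 * k) := mul_nonneg hwb.le (qseq_nonneg hwb.le hwf.le _ _)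
    have h2 : 0 ≤ (if k % 3 = 1 ∧ ((k - 1) / 3) % 2 = 1 then wf * qseq k wb wf 0 ((k - 1) / 3)
        else 0) := by
      split
      · exact mul_nonneg hwf.le (qseq_nonneg hwb.le hwf.le _ _)
      · exact le_refl 0
    simp only [reduceIte]
    linarith
  | succ i ih =>
    set m := Col^[i] k with hm
    rw [Function.iterate_succ_apply', ← hm]
    by_cases hpar : m % 2 = 1
    · have hcol : Col m = 3 * m + 1 := by rw [Col, if_pos hpar]
      rw [hcol]
      have hcond : (3 * m + 1) % 3 = 1 ∧ ((3 * m + 1 - 1) / 3) % 2 = 1 := by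
        constructor <;> omega
      have hdiv : (3 * m + 1 - 1) / 3 = m := by omega
      rw [qseq_succ, if_pos hcond, hdiv]
      have h1 : 0 ≤ wb * qseq k wb wf (i + 1) (2 * (3 * m + 1)) :=
        mul_nonneg hwb.le (qseq_nonneg hwb.le hwf.le _ _)
      have h2 : 0 < wf * qseq k wb wf (i + 1) m := mul_pos hwf ih
      have h3 : (0:ℝ) ≤ (if 3 * m + 1 = k then 1 else 0) := by positivity
      linarith
    · have hcol : Col m = m / 2 := by rw [Col, if_neg hpar]
      rw [hcol]
      have hdbl : 2 * (m / 2) = m := by omega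
      rw [qseq_succ, hdbl]
      have h1 : 0 < wb * qseq k wb wf (i + 1) m := mul_pos hwb ih
      have h2 : 0 ≤ (if m / 2 % 3 = 1 ∧ ((m / 2 - 1) / 3) % 2 = 1 then
          wf * qseq k wb wf (i + 1) ((m / 2 - 1) / 3) else 0) := by
        split
        · exact mul_nonneg hwf.le (qseq_nonneg hwb.le hwf.le _ _)
        · exact le_refl 0
      have h3 : (0:ℝ) ≤ (if m / 2 = k then 1 else 0) := by positivity
      linarith

lemma col_double (X : ℕ) : Col (2 * X) = X := by
  rw [Col, if_neg (by omega)]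
  omega

lemma col_halve (h o : ℕ) : ∀ d, d ≤ h → Col^[d] (2 ^ h * o) = 2 ^ (h - d) * o := by
  intro d
  induction d with
  | zero => simp
  | succ d ih =>
    intro hd
    rw [Function.iterate_succ_apply', ih (by omega)]
    have he : h - d = (h - (d + 1)) + 1 := by omega
    rw [he, (by ring : 2 ^ ((h - (d + 1)) + 1) * o = 2 * (2 ^ (h - (d + 1)) * o)), col_double]

lemma approx (k : ℕ) (wb wf : ℝ) (hwb : 0 ≤ wb) (hwf : 0 ≤ wf) (a : ℕ → ℂ) (C : ℝ)
    (hC : ∀ n, ‖a n‖ ≤ C)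
    (hrec : ∀ n : ℕ, a n = (wb : ℂ) * a (2 * n) +
      (if n % 3 = 1 ∧ ((n - 1) / 3) % 2 = 1 then (wf : ℂ) * a ((n - 1) / 3) else 0) +
      (if n = k then 1 else 0)) :
    ∀ N n, ‖a n - ((qseq k wb wf N n : ℝ) : ℂ)‖ ≤ C * (wb + wf) ^ N := by
  have hC0 : 0 ≤ C := le_trans (norm_nonneg _) (hC 0)
  intro N
  induction N with
  | zero =>
    intro n
    rw [qseq_zero]
    simpa using hC n
  | succ N ih =>
    intro n
    have hs : 0 ≤ C * (wb + wf) ^ N := by positivity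
    have hb1 : ‖(wb : ℂ) * (a (2 * n) - ((qseq k wb wf N (2 * n) : ℝ) : ℂ))‖
        ≤ wb * (C * (wb + wf) ^ N) := by
      rw [norm_mul, Complex.norm_real, Real.norm_eq_abs, _root_.abs_of_nonneg hwb]
      exact mul_le_mul_of_nonneg_left (ih _) hwb
    rw [hrec n, qseq_succ]
    by_cases hc : n % 3 = 1 ∧ ((n - 1) / 3) % 2 = 1
    · have hb2 : ‖(wf : ℂ) * (a ((n - 1) / 3) - ((qseq k wb wf N ((n - 1) / 3) : ℝ) : ℂ))‖
          ≤ wf * (C * (wb + wf) ^ N) := by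
        rw [norm_mul, Complex.norm_real, Real.norm_eq_abs, _root_.abs_of_nonneg hwf]
        exact mul_le_mul_of_nonneg_left (ih _) hwf
      rw [if_pos hc, if_pos hc]
      by_cases hk' : n = k
      · rw [if_pos hk', if_pos hk']
        have heq : (wb : ℂ) * a (2 * n) + (wf : ℂ) * a ((n - 1) / 3) + 1 -
              ((((wb * qseq k wb wf N (2 * n) + wf * qseq k wb wf N ((n - 1) / 3)) + 1 : ℝ)) : ℂ)
            = (wb : ℂ) * (a (2 * n) - ((qseq k wb wf N (2 * n) : ℝ) : ℂ)) +
              (wf : ℂ) * (a ((n - 1) / 3) - ((qseq k wb wf N ((n - 1) / 3) : ℝ) : ℂ)) := by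
          push_cast
          ring
        rw [heq]
        calc ‖_ + _‖ ≤ _ := norm_add_le _ _
          _ ≤ wb * (C * (wb + wf) ^ N) + wf * (C * (wb + wf) ^ N) := add_le_add hb1 hb2
          _ = C * (wb + wf) ^ (N + 1) := by ring
      · rw [if_neg hk', if_neg hk']
        have heq : (wb : ℂ) * a (2 * n) + (wf : ℂ) * a ((n - 1) / 3) + 0 -
              ((((wb * qseq k wb wf N (2 * n) + wf * qseq k wb wf N ((n - 1) / 3)) + 0 : ℝ)) : ℂ)
            = (wb : ℂ) * (a (2 * n) - ((qseq k wb wf N (2 * n) : ℝ) : ℂ)) +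
              (wf : ℂ) * (a ((n - 1) / 3) - ((qseq k wb wf N ((n - 1) / 3) : ℝ) : ℂ)) := by
          push_cast
          ring
        rw [heq]
        calc ‖_ + _‖ ≤ _ := norm_add_le _ _
          _ ≤ wb * (C * (wb + wf) ^ N) + wf * (C * (wb + wf) ^ N) := add_le_add hb1 hb2
          _ = C * (wb + wf) ^ (N + 1) := by ring
    · rw [if_neg hc, if_neg hc]
      have hwfs : wf * (C * (wb + wf) ^ N) ≥ 0 := by positivity
      by_cases hk' : n = k
      · rw [if_pos hk', if_pos hk']
        have heq : (wb : ℂ) * a (2 * n) + 0 + 1 -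
              ((((wb * qseq k wb wf N (2 * n) + 0) + 1 : ℝ)) : ℂ)
            = (wb : ℂ) * (a (2 * n) - ((qseq k wb wf N (2 * n) : ℝ) : ℂ)) := by
          push_cast
          ring
        rw [heq]
        calc ‖_‖ ≤ wb * (C * (wb + wf) ^ N) := hb1
          _ ≤ wb * (C * (wb + wf) ^ N) + wf * (C * (wb + wf) ^ N) := by linarith
          _ = C * (wb + wf) ^ (N + 1) := by ring
      · rw [if_neg hk', if_neg hk']
        have heq : (wb : ℂ) * a (2 * n) + 0 + 0 -
              ((((wb * qseq k wb wf N (2 * n) + 0) + 0 : ℝ)) : ℂ)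
            = (wb : ℂ) * (a (2 * n) - ((qseq k wb wf N (2 * n) : ℝ) : ℂ)) := by
          push_cast
          ring
        rw [heq]
        calc ‖_‖ ≤ wb * (C * (wb + wf) ^ N) := hb1
          _ ≤ wb * (C * (wb + wf) ^ N) + wf * (C * (wb + wf) ^ N) := by linarith
          _ = C * (wb + wf) ^ (N + 1) := by ring

theorem stmt_13 (k : ℕ) (wb wf : ℝ) (f : ℂ → ℂ) (a : ℕ → ℂ) (hk : 0 < k)
    (hwb : 0 < wb) (hwf : 0 < wf) (hw : wb + wf < 1)
    (hf : IsSolution k wb wf f) (ha : HasCoeffs f a)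
    (h o : ℕ) (ho : Odd o) (hopos : 0 < o)
    (horbit : ∃ i : ℕ, Col^[i] k = 2 ^ h * o) :
    ∀ j : ℕ, j ≤ h → (a (2 ^ j * o)).im = 0 ∧ 0 < (a (2 ^ j * o)).re := by
  obtain ⟨han, ⟨C₀, hC₀⟩, hfe⟩ := hf
  have hball : openUnitDisc = Metric.ball (0 : ℂ) 1 := by
    ext z
    simp [openUnitDisc, Metric.mem_ball, Complex.dist_eq]
  have hd : DifferentiableOn ℂ f (Metric.ball (0 : ℂ) 1) := by
    rw [← hball]
    exact han.differentiableOn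
  have hP : HasFPowerSeriesOnBall f (seriesOf a) 0 1 := hasFPowerSeriesOnBall_of a f ha
  set C : ℝ := max C₀ 0 with hCdef
  have hC : ∀ z : ℂ, ‖z‖ < 1 → ‖f z‖ ≤ C := fun z hz =>
    (hC₀ z hz).trans (le_max_left _ _)
  have hbound : ∀ n, ‖a n‖ ≤ C := coeff_bound_s13 hd C hC hP
  have hrec := recursion k wb wf f a hfe ha
  have happrox := approx k wb wf hwb.le hwf.le a C hbound hrec
  set s : ℝ := wb + wf with hsdef
  have hs0 : 0 ≤ s := by positivity
  have hC0 : 0 ≤ C := le_max_right _ _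
  -- limit of qseq is a n
  have htend : ∀ n : ℕ, Filter.Tendsto (fun N => ((qseq k wb wf N n : ℝ) : ℂ))
      Filter.atTop (nhds (a n)) := by
    intro n
    rw [tendsto_iff_norm_sub_tendsto_zero]
    have hgeo : Filter.Tendsto (fun N : ℕ => C * s ^ N) Filter.atTop (nhds 0) := by
      have := (tendsto_pow_atTop_nhds_zero_of_lt_one hs0 hw).const_mul C
      simpa using this
    refine squeeze_zero (fun N => norm_nonneg _) (fun N => ?_) hgeo
    rw [norm_sub_rev]
    exact happrox N n
  have him : ∀ n : ℕ, (a n).im = 0 := by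
    intro n
    have h1 : Filter.Tendsto (fun N => ((qseq k wb wf N n : ℝ) : ℂ).im)
        Filter.atTop (nhds (a n).im) := (Complex.continuous_im.tendsto _).comp (htend n)
    have h2 : (fun N => ((qseq k wb wf N n : ℝ) : ℂ).im) = fun _ => (0 : ℝ) := by
      funext N; simp
    rw [h2] at h1
    exact (tendsto_nhds_unique tendsto_const_nhds h1).symm
  have hre : ∀ n N₀ : ℕ, qseq k wb wf N₀ n ≤ (a n).re := by
    intro n N₀
    have h1 : Filter.Tendsto (fun N => ((qseq k wb wf N n : ℝ) : ℂ).re)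
        Filter.atTop (nhds (a n).re) := (Complex.continuous_re.tendsto _).comp (htend n)
    have h2 : (fun N => ((qseq k wb wf N n : ℝ) : ℂ).re) = fun N => qseq k wb wf N n := by
      funext N; simp
    rw [h2] at h1
    refine ge_of_tendsto h1 ?_
    filter_upwards [Filter.eventually_ge_atTop N₀] with N hN
    exact qseq_le_of_le hwb.le hwf.le hN n
  obtain ⟨i, hi⟩ := horbit
  intro j hj
  have horb2 : Col^[h - j + i] k = 2 ^ j * o := by
    rw [Function.iterate_add_apply, hi, col_halve h o (h - j) (by omega)]
    congr 2
    omega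
  have hqpos : 0 < qseq k wb wf (h - j + i + 1) (2 ^ j * o) := by
    have := qseq_pos hwb hwf hk (h - j + i)
    rwa [horb2] at this
  exact ⟨him _, lt_of_lt_of_le hqpos (hre _ _)⟩
end

section
/- Assume k ≥ 5, and let f be a solution of the Collatz functional equation for (k, w_b, w_f) with coefficients (aₙ). Then (1 − w_b²·w_f)·a₁ = w_b³·a₈. -/
open FormalMultilinearSeries

lemma coeffs_eq_zero (c : ℕ → ℂ)
    (h : ∀ x : ℂ, ‖x‖ < 1 → HasSum (fun n => c n * x ^ n) 0) :
    ∀ n, c n = 0 := by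
  have hsum : Summable fun n => ‖ofScalars ℂ c n‖ * ((1/2 : NNReal) : ℝ) ^ n := by
    have h0 : ‖(1/2 : ℂ)‖ < 1 := by
      rw [norm_div]; norm_num
    have h2 : Summable fun n => ‖c n * (1/2 : ℂ) ^ n‖ :=
      summable_norm_iff.mpr (h (1/2) h0).summable
    refine h2.congr fun n => ?_
    rw [norm_mul, norm_pow, ofScalars_norm]
    norm_num
  have hball : HasFPowerSeriesOnBall (fun _ : ℂ => (0 : ℂ)) (ofScalars ℂ c) 0 (1/2) := by
    refine ⟨?_, by norm_num, ?_⟩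
    · have h1 := (ofScalars ℂ c).le_radius_of_summable_norm hsum
      refine le_trans (le_of_eq ?_) h1
      rw [ENNReal.coe_div (by norm_num)]
      norm_num
    · intro y hy
      rw [mem_emetric_ball_zero_iff] at hy
      have h1 : (‖y‖₊ : ENNReal) < 1 := lt_trans hy (by norm_num)
      have h2 : ‖y‖₊ < 1 := by exact_mod_cast h1
      have hy' : ‖y‖ < 1 := h2
      have := h y hy'
      simp only [ofScalars_apply_eq, smul_eq_mul]
      exact this
  have hz : ofScalars ℂ c = 0 := HasFPowerSeriesAt.eq_zero ⟨1/2, hball⟩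
  have hc : c = 0 := (ofScalars_series_eq_zero ℂ).mp hz
  intro n; simp [hc]


theorem stmt_14 (k : ℕ) (wb wf : ℝ) (f : ℂ → ℂ) (a : ℕ → ℂ) (hk : 5 ≤ k)
    (hf : IsSolution k wb wf f) (ha : HasCoeffs f a) :
    (1 - (wb : ℂ) ^ 2 * (wf : ℂ)) * a 1 = (wb : ℂ) ^ 3 * a 8 := by
  set c : ℕ → ℂ := fun m =>
    (if m % 2 = 0 then 2 * a (m / 2) else 0)
    - (wb : ℂ) * (1 + (-1 : ℂ) ^ m) * a m
    - (if m % 6 = 2 then (wf : ℂ) * (1 - (-1 : ℂ) ^ ((m - 2) / 6)) * a ((m - 2) / 6) else 0)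
    - (if m = 2 * k then 2 else 0) with hc
  have key : ∀ m, c m = 0 := by
    apply coeffs_eq_zero
    intro x hx
    have hx2 : ‖x ^ 2‖ < 1 := by
      rw [norm_pow]; exact pow_lt_one₀ (norm_nonneg x) hx (by norm_num)
    have hx6 : ‖x ^ 6‖ < 1 := by
      rw [norm_pow]; exact pow_lt_one₀ (norm_nonneg x) hx (by norm_num)
    have hxn : ‖-x‖ < 1 := by rwa [norm_neg]
    have hx6n : ‖-x ^ 6‖ < 1 := by rwa [norm_neg]
    -- piece 1 : 2 f(x²)
    have S1 : HasSum (fun n => 2 * a n * x ^ (2 * n)) (2 * f (x ^ 2)) := by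
      have := (ha (x ^ 2) hx2).mul_left 2
      refine this.congr_fun fun n => ?_
      rw [pow_mul]; ring
    have d1 : HasSum (fun m => (if m % 2 = 0 then 2 * a (m / 2) else 0) * x ^ m)
        (2 * f (x ^ 2)) := by
      have hinj : Function.Injective (fun n : ℕ => 2 * n) := fun p q h => by simp only [] at h; omega
      refine (hinj.hasSum_iff ?_).mp ?_
      · intro m hm
        have h2 : m % 2 ≠ 0 := by
          intro h; exact hm ⟨m / 2, by simp only []; omega⟩
        simp [h2]
      · refine S1.congr_fun fun n => ?_
        simp [Nat.mul_div_cancel_left n (by norm_num : 0 < 2), Nat.mul_mod_right]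
    -- piece 2 : wb (f x + f (-x))
    have d2 : HasSum (fun m => ((wb : ℂ) * (1 + (-1 : ℂ) ^ m) * a m) * x ^ m)
        ((wb : ℂ) * (f x + f (-x))) := by
      have := ((ha x hx).add (ha (-x) hxn)).mul_left (wb : ℂ)
      refine this.congr_fun fun n => ?_
      rw [neg_pow]; ring
    -- piece 3 : wf x² (f(x⁶) − f(−x⁶))
    have S3 : HasSum (fun n => ((wf : ℂ) * (1 - (-1 : ℂ) ^ n) * a n) * x ^ (6 * n + 2))
        ((wf : ℂ) * x ^ 2 * (f (x ^ 6) - f (-x ^ 6))) := by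
      have := ((ha (x ^ 6) hx6).sub (ha (-x ^ 6) hx6n)).mul_left ((wf : ℂ) * x ^ 2)
      refine this.congr_fun fun n => ?_
      rw [neg_pow, pow_add, pow_mul]; ring
    have d3 : HasSum (fun m =>
        (if m % 6 = 2 then (wf : ℂ) * (1 - (-1 : ℂ) ^ ((m - 2) / 6)) * a ((m - 2) / 6) else 0)
          * x ^ m)
        ((wf : ℂ) * x ^ 2 * (f (x ^ 6) - f (-x ^ 6))) := by
      have hinj : Function.Injective (fun n : ℕ => 6 * n + 2) := fun p q h => by simp only [] at h; omega
      refine (hinj.hasSum_iff ?_).mp ?_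
      · intro m hm
        have h2 : m % 6 ≠ 2 := by
          intro h; exact hm ⟨m / 6, by simp only []; omega⟩
        simp [h2]
      · refine S3.congr_fun fun n => ?_
        have h1 : (6 * n + 2) % 6 = 2 := by omega
        have h2 : (6 * n + 2 - 2) / 6 = n := by omega
        simp [h1, h2]
    -- piece 4 : 2 x^(2k)
    have d4 : HasSum (fun m => (if m = 2 * k then (2 : ℂ) else 0) * x ^ m)
        (2 * x ^ (2 * k)) := by
      have := hasSum_ite_eq (2 * k) ((2 : ℂ) * x ^ (2 * k))
      refine this.congr_fun fun m => ?_
      by_cases hm : m = 2 * k <;> simp [hm]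
    have heq := hf.2.2 x hx
    have total := ((d1.sub d2).sub d3).sub d4
    have hval : 2 * f (x ^ 2) - (wb : ℂ) * (f x + f (-x))
        - (wf : ℂ) * x ^ 2 * (f (x ^ 6) - f (-x ^ 6)) - 2 * x ^ (2 * k) = 0 := by
      rw [heq]; ring
    rw [hval] at total
    refine total.congr_fun fun m => ?_
    rw [hc]; ring
  have e2 := key 2
  have e4 := key 4
  have e8 := key 8
  rw [hc] at e2 e4 e8
  have hne2 : ¬ (2 = 2 * k) := by omega
  have hne4 : ¬ (4 = 2 * k) := by omega
  have hne8 : ¬ (8 = 2 * k) := by omega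
  norm_num [hne2, hne4, hne8] at e2 e4 e8
  -- e2 : 2 a1 = 2 wb a2 form, etc.
  linear_combination (wb : ℂ) ^ 2 / 2 * e8 + (wb : ℂ) / 2 * e4 + (1 : ℂ) / 2 * e2
end

section
/- Assume 0 < w_b, 0 < w_f and w_b + w_f < 1, and let f be a solution of the Collatz functional equation for (5, w_b, w_f) with coefficients (aₙ). Then a₁ > 0 (this verifies the arrival conjecture for k = 5). -/
open FormalMultilinearSeries

lemma ofScalars_coeff (d : ℕ → ℂ) (n : ℕ) : (ofScalars ℂ d).coeff n = d n := by
  simp [FormalMultilinearSeries.coeff, ofScalars, List.prod_ofFn]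

lemma hasFPS_of_hasSum {g : ℂ → ℂ} {d : ℕ → ℂ}
    (h : ∀ x : ℂ, ‖x‖ < 1 → HasSum (fun n => d n * x ^ n) (g x))
    {r : NNReal} (hrpos : 0 < r) (hr : (r : ℝ) < 1) :
    HasFPowerSeriesOnBall g (FormalMultilinearSeries.ofScalars ℂ d) 0 r := by
  set t : ℝ := (1 + r) / 2 with ht
  have hr0 : (0:ℝ) ≤ r := r.2
  have htr : (r : ℝ) < t := by rw [ht]; nlinarith
  have ht1 : t < 1 := by rw [ht]; nlinarith
  have ht0 : 0 ≤ t := by positivity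
  have hsum : Summable (fun n => d n * (t : ℂ) ^ n) := by
    refine (h t ?_).summable
    simpa [Complex.norm_real, Real.norm_eq_abs, abs_of_nonneg ht0] using ht1
  have htend : Filter.Tendsto (fun n => ‖d n * (t : ℂ) ^ n‖) Filter.atTop (nhds 0) := by
    simpa using hsum.tendsto_atTop_zero.norm
  obtain ⟨C, hC⟩ := htend.bddAbove_range
  have hbound : ∀ n, ‖d n‖ * t ^ n ≤ C := by
    intro n
    have := hC (Set.mem_range_self n)
    simpa [norm_mul, norm_pow, Complex.norm_real, abs_of_nonneg ht0] using this
  have hradius : (r : ENNReal) ≤ (ofScalars ℂ d).radius := by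
    refine le_trans ?_ ((ofScalars ℂ d).le_radius_of_bound C (r := ⟨t, ht0⟩) ?_)
    · exact ENNReal.coe_le_coe.mpr (NNReal.coe_le_coe.mp (le_of_lt htr))
    · intro n
      rw [ofScalars_norm]
      exact hbound n
  refine ⟨hradius, ?_, ?_⟩
  · exact_mod_cast hrpos
  · intro y hy
    rw [EMetric.mem_ball, edist_zero_right] at hy
    have hy' : ‖y‖ < 1 := by
      have : (‖y‖₊ : ℝ) < r := by exact_mod_cast hy
      calc ‖y‖ = ‖y‖ := rfl
        _ < r := this
        _ < 1 := hr
    have h2 := h y hy'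
    simp only [zero_add]
    refine HasSum.congr_fun h2 ?_
    intro n
    rw [ofScalars_apply_eq]
    simp [smul_eq_mul]

lemma coeff_unique {g : ℂ → ℂ} {d e : ℕ → ℂ}
    (hd : ∀ x : ℂ, ‖x‖ < 1 → HasSum (fun n => d n * x ^ n) (g x))
    (he : ∀ x : ℂ, ‖x‖ < 1 → HasSum (fun n => e n * x ^ n) (g x)) : d = e := by
  have h2 : (0:ℝ) < ((1/2 : NNReal) : ℝ) := by norm_num
  have := (hasFPS_of_hasSum hd (r := 1/2) (by norm_num) (by norm_num)).hasFPowerSeriesAt.eq_formalMultilinearSeries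
    (hasFPS_of_hasSum he (r := 1/2) (by norm_num) (by norm_num)).hasFPowerSeriesAt
  exact ofScalars_series_injective ℂ ℂ this

open Real in
lemma coeff_bound_s16 {f : ℂ → ℂ} {a : ℕ → ℂ} {C : ℝ}
    (hf : AnalyticOnNhd ℂ f openUnitDisc)
    (hC : ∀ z ∈ openUnitDisc, ‖f z‖ ≤ C)
    (ha : HasCoeffs f a) (n : ℕ) : ‖a n‖ ≤ 2 * C := by
  have hn1 : (0:ℝ) < (n:ℝ)+1 := by positivity
  obtain ⟨t, htdef⟩ : ∃ t : ℝ, t = 1 - 1/(2*((n:ℝ)+1)) := ⟨_, rfl⟩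
  have hhalf : (1:ℝ)/(2*((n:ℝ)+1)) ≤ 1/2 := by
    rw [div_le_div_iff₀ (by positivity) (by norm_num)]
    nlinarith
  have hpos : (0:ℝ) < 1/(2*((n:ℝ)+1)) := by positivity
  have ht0 : (1:ℝ)/2 ≤ t := by rw [htdef]; linarith
  have ht0' : (0:ℝ) < t := by linarith
  have ht1 : t < 1 := by rw [htdef]; linarith
  have hCnonneg : 0 ≤ C := le_trans (norm_nonneg _) (hC 0 (by simp [openUnitDisc]))
  obtain ⟨r, hrt⟩ : ∃ r : NNReal, (r : ℝ) = t := ⟨⟨t, le_of_lt ht0'⟩, rfl⟩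
  have hdiff : DifferentiableOn ℂ f (Metric.closedBall 0 (r:ℝ)) := by
    intro z hz
    rw [Metric.mem_closedBall, dist_zero_right, hrt] at hz
    have hz1 : z ∈ openUnitDisc := by
      simp only [openUnitDisc, Set.mem_setOf_eq]
      exact lt_of_le_of_lt hz ht1
    exact (hf z hz1).differentiableAt.differentiableWithinAt
  have hps := hdiff.hasFPowerSeriesOnBall (by rw [← NNReal.coe_pos, hrt]; exact ht0')
  have hps2 := hasFPS_of_hasSum ha (r := 1/2) (by norm_num) (by norm_num)
  have heq : cauchyPowerSeries f 0 (r:ℝ) = ofScalars ℂ a :=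
    hps.hasFPowerSeriesAt.eq_formalMultilinearSeries hps2.hasFPowerSeriesAt
  have hnorm : ‖a n‖ = ‖cauchyPowerSeries f 0 t n‖ := by
    rw [← hrt, heq, ofScalars_norm]
  have hmem : ∀ θ : ℝ, circleMap 0 t θ ∈ openUnitDisc := by
    intro θ
    simp only [openUnitDisc, Set.mem_setOf_eq]
    rw [show ‖circleMap 0 t θ‖ = |t| from norm_circleMap_zero t θ,
      abs_of_pos ht0']
    exact ht1
  have hcont : Continuous fun θ : ℝ => ‖f (circleMap 0 t θ)‖ :=
    (hf.continuousOn.comp_continuous (continuous_circleMap 0 t) hmem).norm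
  have hint : (∫ θ : ℝ in (0)..(2*π), ‖f (circleMap 0 t θ)‖) ≤ 2*π*C := by
    have h1 : (∫ θ : ℝ in (0)..(2*π), ‖f (circleMap 0 t θ)‖) ≤
        ∫ _ : ℝ in (0)..(2*π), C := by
      refine intervalIntegral.integral_mono_on (by positivity)
        (hcont.intervalIntegrable 0 (2*π)) intervalIntegrable_const ?_
      intro θ _
      exact le_trans (le_of_eq rfl) (hC _ (hmem θ))
    calc (∫ θ : ℝ in (0)..(2*π), ‖f (circleMap 0 t θ)‖) ≤ ∫ _ : ℝ in (0)..(2*π), C := h1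
      _ = (2*π - 0) • C := by rw [intervalIntegral.integral_const]
      _ = 2*π*C := by rw [smul_eq_mul]; ring
  have hb := norm_cauchyPowerSeries_le f 0 t n
  have hb2 : ‖a n‖ ≤ ((2*π)⁻¹ * (2*π*C)) * |t|⁻¹ ^ n := by
    rw [hnorm]
    refine le_trans hb ?_
    have hpi : (0:ℝ) < (2*π)⁻¹ := by positivity
    gcongr
  have hsimp : ((2*π)⁻¹ * (2*π*C)) = C := by
    field_simp
  rw [hsimp, abs_of_pos ht0'] at hb2
  have hpow : (1:ℝ)/2 ≤ t^n := by
    have h := one_add_mul_le_pow (a := -(1/(2*((n:ℝ)+1)))) (by nlinarith) n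
    have h2 : (n:ℝ) * (1/(2*((n:ℝ)+1))) ≤ 1/2 := by
      rw [mul_one_div, div_le_div_iff₀ (by positivity) (by norm_num)]
      nlinarith
    have h4 : (1 + -(1/(2*((n:ℝ)+1)))) = t := by rw [htdef]; ring
    rw [h4] at h
    nlinarith
  have hpowpos : (0:ℝ) < t^n := by positivity
  calc ‖a n‖ ≤ C * (t⁻¹)^n := hb2
    _ = C / t^n := by rw [inv_pow]; ring
    _ ≤ C / (1/2) := by gcongr
    _ = 2 * C := by ring

lemma coeff_rec {wb wf : ℝ} {f : ℂ → ℂ} {a : ℕ → ℂ}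
    (hfe : ∀ x : ℂ, ‖x‖ < 1 →
      2 * f (x ^ 2) = (wb : ℂ) * (f x + f (-x)) + (wf : ℂ) * x ^ 2 * (f (x ^ 6) - f (-x ^ 6)) +
        2 * x ^ (2 * 5))
    (ha : HasCoeffs f a) (n : ℕ) :
    a n = (wb:ℂ) * a (2*n) + (if n % 6 = 4 then (wf:ℂ) * a ((n-1)/3) else 0)
      + (if n = 5 then 1 else 0) := by
  set L : ℕ → ℂ := fun m => if m % 2 = 0 then 2 * a (m/2) else 0 with hL
  set R : ℕ → ℂ := fun m => (if m % 2 = 0 then 2*(wb:ℂ)*a m else 0)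
      + (if m % 12 = 8 then 2*(wf:ℂ)*a ((m-2)/6) else 0)
      + (if m = 10 then (2:ℂ) else 0) with hR
  have hLsum : ∀ x : ℂ, ‖x‖ < 1 → HasSum (fun m => L m * x ^ m) (2 * f (x^2)) := by
    intro x hx
    have hx2 : ‖x^2‖ < 1 := by
      rw [norm_pow]; exact pow_lt_one₀ (norm_nonneg _) hx (by norm_num)
    have h1 := (ha (x^2) hx2).mul_left 2
    have hinj : Function.Injective (fun k : ℕ => 2 * k) := fun a b h => by
      have h' : 2*a = 2*b := h; omega
    have h0 : ∀ m, m ∉ Set.range (fun k : ℕ => 2*k) → L m * x ^ m = 0 := by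
      intro m hm
      have hmod : ¬ (m % 2 = 0) := by
        intro h; exact hm ⟨m/2, show 2*(m/2) = m by omega⟩
      simp [hL, hmod]
    rw [← hinj.hasSum_iff h0]
    refine h1.congr_fun ?_
    intro k
    have e1 : (2*k) % 2 = 0 := by omega
    have e2 : (2*k)/2 = k := by omega
    simp only [Function.comp_apply, hL, e1, if_pos, e2, pow_mul]
    ring
  have hRsum : ∀ x : ℂ, ‖x‖ < 1 → HasSum (fun m => R m * x ^ m) (2 * f (x^2)) := by
    intro x hx
    have hxn : ‖-x‖ < 1 := by rwa [norm_neg]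
    have hx6 : ‖x^6‖ < 1 := by
      rw [norm_pow]; exact pow_lt_one₀ (norm_nonneg _) hx (by norm_num)
    have hx6n : ‖-x^6‖ < 1 := by rwa [norm_neg]
    -- wb part
    have hb : HasSum (fun m => (if m % 2 = 0 then 2*(wb:ℂ)*a m else 0) * x ^ m)
        ((wb:ℂ) * (f x + f (-x))) := by
      have h1 := ((ha x hx).add (ha (-x) hxn)).mul_left (wb:ℂ)
      refine h1.congr_fun ?_
      intro m
      rcases Nat.even_or_odd m with he | ho
      · have : m % 2 = 0 := Nat.even_iff.mp he
        rw [if_pos this, he.neg_pow]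
        ring
      · have : ¬ (m % 2 = 0) := by rw [Nat.odd_iff] at ho; omega
        rw [if_neg this, ho.neg_pow]
        ring
    -- wf part
    have hc : HasSum (fun m => (if m % 12 = 8 then 2*(wf:ℂ)*a ((m-2)/6) else 0) * x ^ m)
        ((wf:ℂ) * x^2 * (f (x^6) - f (-x^6))) := by
      have h1 := ((ha (x^6) hx6).sub (ha (-x^6) hx6n)).mul_left ((wf:ℂ) * x^2)
      have hinj : Function.Injective (fun k : ℕ => 6*k+2) := fun a b h => by
        have h' : 6*a+2 = 6*b+2 := h; omega
      have h0 : ∀ m, m ∉ Set.range (fun k : ℕ => 6*k+2) →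
          (if m % 12 = 8 then 2*(wf:ℂ)*a ((m-2)/6) else 0) * x ^ m = 0 := by
        intro m hm
        have hmod : ¬ (m % 12 = 8) := by
          intro h; exact hm ⟨(m-2)/6, show 6*((m-2)/6)+2 = m by omega⟩
        simp [hmod]
      rw [← hinj.hasSum_iff h0]
      refine h1.congr_fun ?_
      intro k
      simp only [Function.comp_apply]
      rcases Nat.even_or_odd k with he | ho
      · have h8 : ¬ ((6*k+2) % 12 = 8) := by
          obtain ⟨j, rfl⟩ := he; omega
        rw [if_neg h8, he.neg_pow]
        ring
      · have h8 : (6*k+2) % 12 = 8 := by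
          obtain ⟨j, rfl⟩ := ho; omega
        have e2 : (6*k+2-2)/6 = k := by omega
        rw [if_pos h8, ho.neg_pow, e2]
        rw [pow_add, pow_mul]
        ring
    -- constant part
    have hd : HasSum (fun m => (if m = 10 then (2:ℂ) else 0) * x ^ m) (2 * x ^ 10) := by
      have h1 := hasSum_ite_eq 10 (2 * x ^ 10)
      refine h1.congr_fun ?_
      intro m
      by_cases hm : m = 10
      · subst hm; simp
      · simp [hm]
    have htot := (hb.add hc).add hd
    have hval := (hfe x hx).symm
    norm_num at hval
    rw [hval] at htot
    refine htot.congr_fun ?_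
    intro m
    simp only [hR]
    ring
  have hLR : L = R := coeff_unique hLsum hRsum
  have h2n := congrFun hLR (2*n)
  simp only [hL, hR] at h2n
  have e1 : (2*n) % 2 = 0 := by omega
  have e2 : (2*n)/2 = n := by omega
  rw [if_pos e1, e2] at h2n
  have key : 2 * a n = 2 * ((wb:ℂ) * a (2*n) + (if n % 6 = 4 then (wf:ℂ) * a ((n-1)/3) else 0)
      + (if n = 5 then 1 else 0)) := by
    rw [h2n]
    by_cases h4 : n % 6 = 4
    · have h8 : (2*n) % 12 = 8 := by omega
      have e3 : (2*n-2)/6 = (n-1)/3 := by omega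
      have h10 : ¬ (2*n = 10) := by omega
      have h5 : ¬ (n = 5) := by omega
      rw [if_pos e1, if_pos h8, e3, if_neg h10, if_neg h5, if_pos h4]
      ring
    · have h8 : ¬ ((2*n) % 12 = 8) := by omega
      rw [if_pos e1, if_neg h8, if_neg h4]
      by_cases h5 : n = 5
      · subst h5; norm_num; ring
      · have h10 : ¬ (2*n = 10) := by omega
        rw [if_neg h10, if_neg h5]
        ring
  exact mul_left_cancel₀ two_ne_zero key

noncomputable def collatzT (wb wf : ℝ) (b : ℕ → ℂ) : ℕ → ℂ :=
  fun n => (wb:ℂ) * b (2*n) + (if n % 6 = 4 then (wf:ℂ) * b ((n-1)/3) else 0)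

noncomputable def collatzDelta : ℕ → ℂ := fun n => if n = 5 then 1 else 0

lemma collatzT_add (wb wf : ℝ) (b c : ℕ → ℂ) :
    collatzT wb wf (b + c) = collatzT wb wf b + collatzT wb wf c := by
  funext n
  simp only [collatzT, Pi.add_apply]
  split_ifs <;> ring

lemma collatzT_iterate_add (wb wf : ℝ) (N : ℕ) (b c : ℕ → ℂ) :
    (collatzT wb wf)^[N] (b + c) = (collatzT wb wf)^[N] b + (collatzT wb wf)^[N] c := by
  induction N generalizing b c with
  | zero => simp
  | succ N ih => rw [Function.iterate_succ_apply, Function.iterate_succ_apply,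
      Function.iterate_succ_apply, collatzT_add, ih]

lemma collatzT_norm_le {wb wf : ℝ} (hwb : 0 ≤ wb) (hwf : 0 ≤ wf) {b : ℕ → ℂ} {M : ℝ}
    (hb : ∀ n, ‖b n‖ ≤ M) (n : ℕ) : ‖collatzT wb wf b n‖ ≤ (wb + wf) * M := by
  have hM : 0 ≤ M := le_trans (norm_nonneg _) (hb 0)
  have h1 : ‖(wb:ℂ) * b (2*n)‖ ≤ wb * M := by
    rw [norm_mul, Complex.norm_real, Real.norm_eq_abs, abs_of_nonneg hwb]
    exact mul_le_mul_of_nonneg_left (hb _) hwb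
  have h2 : ‖(if n % 6 = 4 then (wf:ℂ) * b ((n-1)/3) else 0)‖ ≤ wf * M := by
    split_ifs
    · rw [norm_mul, Complex.norm_real, Real.norm_eq_abs, abs_of_nonneg hwf]
      exact mul_le_mul_of_nonneg_left (hb _) hwf
    · simpa using mul_nonneg hwf hM
  calc ‖collatzT wb wf b n‖ ≤ ‖(wb:ℂ) * b (2*n)‖ + ‖(if n % 6 = 4 then (wf:ℂ) * b ((n-1)/3) else 0)‖ :=
        norm_add_le _ _
    _ ≤ wb * M + wf * M := add_le_add h1 h2
    _ = (wb + wf) * M := by ring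

lemma collatzT_pos {wb wf : ℝ} (hwb : 0 ≤ wb) (hwf : 0 ≤ wf) {b : ℕ → ℂ}
    (hb : ∀ n, (b n).im = 0 ∧ 0 ≤ (b n).re) (n : ℕ) :
    (collatzT wb wf b n).im = 0 ∧ 0 ≤ (collatzT wb wf b n).re := by
  simp only [collatzT]
  split_ifs
  · constructor
    · simp [Complex.add_im, Complex.im_ofReal_mul, (hb (2*n)).1, (hb ((n-1)/3)).1]
    · simp only [Complex.add_re, Complex.re_ofReal_mul]
      have := mul_nonneg hwb (hb (2*n)).2
      have := mul_nonneg hwf (hb ((n-1)/3)).2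
      linarith
  · constructor
    · simp [Complex.add_im, Complex.im_ofReal_mul, (hb (2*n)).1]
    · simp only [Complex.add_re, Complex.zero_re, add_zero, Complex.re_ofReal_mul]
      exact mul_nonneg hwb (hb (2*n)).2

theorem stmt_16_aux (wb wf : ℝ) (f : ℂ → ℂ) (a : ℕ → ℂ)
    (hwb : 0 < wb) (hwf : 0 < wf) (hw : wb + wf < 1)
    (hana : AnalyticOnNhd ℂ f openUnitDisc)
    (hCb : ∃ C : ℝ, ∀ z ∈ openUnitDisc, ‖f z‖ ≤ C)
    (hfe : ∀ x : ℂ, ‖x‖ < 1 →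
      2 * f (x ^ 2) = (wb : ℂ) * (f x + f (-x)) + (wf : ℂ) * x ^ 2 * (f (x ^ 6) - f (-x ^ 6)) +
        2 * x ^ (2 * 5))
    (ha : HasCoeffs f a) :
    (a 1).im = 0 ∧ 0 < (a 1).re := by
  obtain ⟨C, hC⟩ := hCb
  set T := collatzT wb wf with hT
  have hM : ∀ n, ‖a n‖ ≤ 2*C := coeff_bound_s16 hana hC ha
  have hrec' : a = T a + collatzDelta := by
    funext n
    exact coeff_rec hfe ha n
  set S : ℕ → ℕ → ℂ := fun N => ∑ k ∈ Finset.range N, (T^[k] collatzDelta) with hS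
  have hpart : ∀ N, a = S N + T^[N] a := by
    intro N
    induction N with
    | zero => simp [hS]
    | succ N ih =>
      calc a = S N + T^[N] a := ih
        _ = S N + T^[N] (T a + collatzDelta) := by rw [← hrec']
        _ = S N + (T^[N] (T a) + T^[N] collatzDelta) := by rw [collatzT_iterate_add]
        _ = S (N+1) + T^[N+1] a := by
            simp only [hS, Finset.sum_range_succ, Function.iterate_succ_apply]
            abel
  have hpos : ∀ k n, ((T^[k] collatzDelta) n).im = 0 ∧ 0 ≤ ((T^[k] collatzDelta) n).re := by
    intro k
    induction k with
    | zero =>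
      intro n
      simp only [Function.iterate_zero, id_eq, collatzDelta]
      split_ifs <;> simp
    | succ k ih =>
      intro n
      rw [Function.iterate_succ_apply']
      exact collatzT_pos hwb.le hwf.le ih n
  have hTn : ∀ N n, ‖(T^[N] a) n‖ ≤ (wb+wf)^N * (2*C) := by
    intro N
    induction N with
    | zero => simpa using hM
    | succ N ih =>
      intro n
      rw [Function.iterate_succ_apply']
      calc ‖T (T^[N] a) n‖ ≤ (wb+wf) * ((wb+wf)^N * (2*C)) :=
            collatzT_norm_le hwb.le hwf.le ih n
        _ = (wb+wf)^(N+1) * (2*C) := by ring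
  have hq0 : (0:ℝ) ≤ wb + wf := by linarith
  have htend : Filter.Tendsto (fun N => S N 1) Filter.atTop (nhds (a 1)) := by
    have hsub : ∀ N, S N 1 - a 1 = -((T^[N] a) 1) := by
      intro N
      have := congrFun (hpart N) 1
      simp only [Pi.add_apply] at this
      rw [this]; ring
    have hzero : Filter.Tendsto (fun N => S N 1 - a 1) Filter.atTop (nhds 0) :=
      squeeze_zero_norm (a := fun N => (wb+wf)^N * (2*C))
        (fun N => by rw [hsub N, norm_neg]; exact hTn N 1)
        (by simpa using (tendsto_pow_atTop_nhds_zero_of_lt_one hq0 hw).mul_const (2*C))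
    have := hzero.add_const (a 1)
    simpa using this
  have hSim : ∀ N, (S N 1).im = 0 := by
    intro N
    simp only [hS, Finset.sum_apply, Complex.im_sum]
    exact Finset.sum_eq_zero fun k _ => (hpos k 1).1
  have him : (a 1).im = 0 := by
    have h1 : Filter.Tendsto (fun N => (S N 1).im) Filter.atTop (nhds ((a 1).im)) := (Complex.continuous_im.tendsto (a 1)).comp htend
    have h2 : Filter.Tendsto (fun N => (S N 1).im) Filter.atTop (nhds 0) := by
      simpa [hSim] using tendsto_const_nhds (α := ℝ) (f := Filter.atTop (α := ℕ)) (a := 0)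
    exact tendsto_nhds_unique h1 h2
  refine ⟨him, ?_⟩
  -- monotone real parts
  have hmono : Monotone (fun N => (S N 1).re) := by
    apply monotone_nat_of_le_succ
    intro N
    simp only [hS, Finset.sum_apply, Finset.sum_range_succ, Complex.re_sum]
    have := (hpos N 1).2
    rw [Complex.add_re]
    simp only [Complex.re_sum]
    linarith
  have hre : Filter.Tendsto (fun N => (S N 1).re) Filter.atTop (nhds ((a 1).re)) := (Complex.continuous_re.tendsto (a 1)).comp htend
  have hge : (S 6 1).re ≤ (a 1).re := by
    refine ge_of_tendsto hre ?_
    exact Filter.eventually_atTop.mpr ⟨6, fun N hN => hmono hN⟩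
  have hval : (T^[5] collatzDelta) 1 = (((wb^4*wf : ℝ)) : ℂ) := by
    simp only [hT, show (5:ℕ) = 4+1 from rfl, Function.iterate_succ, Function.iterate_zero,
      Function.comp_apply, id_eq]
    norm_num [collatzT, collatzDelta]
    push_cast
    ring
  have h56 : (T^[5] collatzDelta 1).re ≤ (S 6 1).re := by
    simp only [hS, Finset.sum_apply, Complex.re_sum]
    refine Finset.single_le_sum (f := fun k => ((T^[k] collatzDelta) 1).re) ?_ ?_
    · intro k _; exact (hpos k 1).2
    · simp
  have hvpos : 0 < (T^[5] collatzDelta 1).re := by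
    rw [hval, Complex.ofReal_re]
    positivity
  linarith


theorem stmt_16 (wb wf : ℝ) (f : ℂ → ℂ) (a : ℕ → ℂ)
    (hwb : 0 < wb) (hwf : 0 < wf) (hw : wb + wf < 1)
    (hf : IsSolution 5 wb wf f) (ha : HasCoeffs f a) :
    (a 1).im = 0 ∧ 0 < (a 1).re := by
  obtain ⟨h1, h2, h3⟩ := hf
  exact stmt_16_aux wb wf f a hwb hwf hw h1 h2 h3 ha
end
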